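/- arXiv:2308.11425 — 8 statements merged into one kernel-verified Lean document; each statement's English description precedes it below -/
import Mathlib

section
/- Let T be an abelian group, V a finite-dimensional complex vector space with a nondegenerate alternating bilinear form B, and ρ : T → GL(V) a representation such that every ρ(t) is an isometry of B and such that V is the sum of its weight spaces V_χ = {v ∈ V : ρ(t)v = χ(t)v for all t ∈ T}, where χ ranges over group homomorphisms T → ℂ^×. Then there exist ρ-invariant subspaces W and W' of V with V = W ⊕ W', with B vanishing identically on W × W and on W' × W', and such that the map sending w' ∈ W' to the linear functional B(·, w') on W is a T-equivariant isomorphism from W' onto the dual representation of W. In particular ρ is isomorphic to σ ⊕ σ^∨, where σ is the action of T on W. -/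
open Module

def weightSpace {T V : Type*} [CommGroup T] [AddCommGroup V] [Module ℂ V]
    (ρ : T →* (V ≃ₗ[ℂ] V)) (χ : T →* ℂˣ) : Submodule ℂ V where
  carrier := {v | ∀ t : T, ρ t v = (χ t : ℂ) • v}
  add_mem' := by
    intro a b ha hb t
    simp [map_add, ha t, hb t, smul_add]
  zero_mem' := by intro t; simp
  smul_mem' := by
    intro c v hv t
    rw [map_smul, hv t, smul_comm]

section lag
variable {V : Type*} [AddCommGroup V] [Module ℂ V] [FiniteDimensional ℂ V]
variable (B : V →ₗ[ℂ] V →ₗ[ℂ] ℂ)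

omit [FiniteDimensional ℂ V] in
lemma my_skew (halt : ∀ v : V, B v v = 0) (v w : V) : B w v = -B v w := by
  have h := halt (v + w)
  simp only [map_add, LinearMap.add_apply] at h
  have h1 := halt v; have h2 := halt w
  linear_combination h - h1 - h2

lemma lag_aux (halt : ∀ v : V, B v v = 0) :
    ∀ (n : ℕ) (U : Submodule ℂ V), finrank ℂ U ≤ n →
    ∃ L L' : Submodule ℂ V, L ≤ U ∧ L' ≤ U ∧ L ⊔ L' = U ∧
      (∀ x ∈ L, ∀ y ∈ L, B x y = 0) ∧ (∀ x ∈ L', ∀ y ∈ L', B x y = 0) := by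
  intro n
  induction n with
  | zero =>
    intro U hU
    have : U = ⊥ := by
      rw [← Submodule.finrank_eq_zero (S := U)]; omega
    exact ⟨⊥, ⊥, bot_le, bot_le, by simp [this], by simp, by simp⟩
  | succ n ih =>
    intro U hU
    by_cases hz : ∀ v ∈ U, ∀ w ∈ U, B v w = 0
    · exact ⟨U, ⊥, le_rfl, bot_le, by simp, hz, by simp⟩
    push_neg at hz
    obtain ⟨v, hvU, w, hwU, hc⟩ := hz
    set U₀ : Submodule ℂ V := U ⊓ (LinearMap.ker (B v) ⊓ LinearMap.ker (B w)) with hU₀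
    have hvn : v ∉ U₀ := by
      intro hv
      have h1 : B w v = 0 := hv.2.2
      rw [my_skew B halt] at h1
      exact hc (neg_eq_zero.mp h1)
    have hlt : U₀ < U := lt_of_le_of_ne inf_le_left (fun h => hvn (h ▸ hvU))
    have hrank : finrank ℂ U₀ ≤ n := by
      have := Submodule.finrank_lt_finrank_of_lt hlt
      omega
    obtain ⟨L, L', hLU, hL'U, hsup, hisoL, hisoL'⟩ := ih U₀ hrank
    have hLker : ∀ x ∈ L, B v x = 0 ∧ B w x = 0 := fun x hx =>
      ⟨(hLU hx).2.1, (hLU hx).2.2⟩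
    have hL'ker : ∀ x ∈ L', B v x = 0 ∧ B w x = 0 := fun x hx =>
      ⟨(hL'U hx).2.1, (hL'U hx).2.2⟩
    refine ⟨L ⊔ (ℂ ∙ v), L' ⊔ (ℂ ∙ w), ?_, ?_, ?_, ?_, ?_⟩
    · exact sup_le (hLU.trans hlt.le)
        ((Submodule.span_singleton_le_iff_mem v U).mpr hvU)
    · exact sup_le (hL'U.trans hlt.le)
        ((Submodule.span_singleton_le_iff_mem w U).mpr hwU)
    · apply le_antisymm
      · exact sup_le (sup_le (hLU.trans hlt.le)
            ((Submodule.span_singleton_le_iff_mem v U).mpr hvU))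
          (sup_le (hL'U.trans hlt.le)
            ((Submodule.span_singleton_le_iff_mem w U).mpr hwU))
      · intro u hu
        set c := B v w with hcdef
        set u' := u + (B w u / c) • v - (B v u / c) • w with hu'def
        have hu'0 : u' ∈ U₀ := by
          refine ⟨?_, ?_, ?_⟩
          · exact Submodule.sub_mem U (Submodule.add_mem U hu
              (Submodule.smul_mem U _ hvU)) (Submodule.smul_mem U _ hwU)
          · show B v u' = 0
            simp only [hu'def, map_add, map_sub, map_smul, smul_eq_mul]
            rw [halt v]
            field_simp
            rw [hcdef]; ring
          · show B w u' = 0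
            simp only [hu'def, map_add, map_sub, map_smul, smul_eq_mul]
            rw [halt w, my_skew B halt v w]
            field_simp
            rw [hcdef]; ring
        have h1 : u' ∈ (L ⊔ ℂ ∙ v) ⊔ (L' ⊔ ℂ ∙ w) := by
          have : u' ∈ L ⊔ L' := hsup ▸ hu'0
          exact (sup_le_sup le_sup_left le_sup_left : L ⊔ L' ≤ _) this
        have hv' : v ∈ (L ⊔ ℂ ∙ v) ⊔ (L' ⊔ ℂ ∙ w) :=
          Submodule.mem_sup_left
            (Submodule.mem_sup_right (Submodule.mem_span_singleton_self v))
        have hw' : w ∈ (L ⊔ ℂ ∙ v) ⊔ (L' ⊔ ℂ ∙ w) :=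
          Submodule.mem_sup_right
            (Submodule.mem_sup_right (Submodule.mem_span_singleton_self w))
        have : u = u' - (B w u / c) • v + (B v u / c) • w := by
          rw [hu'def]; abel
        rw [this]
        exact Submodule.add_mem _
          (Submodule.sub_mem _ h1 (Submodule.smul_mem _ _ hv'))
          (Submodule.smul_mem _ _ hw')
    · intro x hx y hy
      obtain ⟨l, hl, z, hz, rfl⟩ := Submodule.mem_sup.mp hx
      obtain ⟨α, rfl⟩ := Submodule.mem_span_singleton.mp hz
      obtain ⟨l', hl', z', hz', rfl⟩ := Submodule.mem_sup.mp hy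
      obtain ⟨β, rfl⟩ := Submodule.mem_span_singleton.mp hz'
      have e1 : B l l' = 0 := hisoL l hl l' hl'
      have e2 : B v l' = 0 := (hLker l' hl').1
      have e3 : B l v = 0 := by rw [my_skew B halt, (hLker l hl).1, neg_zero]
      simp [map_add, map_smul, e1, e2, e3, halt v]
    · intro x hx y hy
      obtain ⟨l, hl, z, hz, rfl⟩ := Submodule.mem_sup.mp hx
      obtain ⟨α, rfl⟩ := Submodule.mem_span_singleton.mp hz
      obtain ⟨l', hl', z', hz', rfl⟩ := Submodule.mem_sup.mp hy
      obtain ⟨β, rfl⟩ := Submodule.mem_span_singleton.mp hz'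
      have e1 : B l l' = 0 := hisoL' l hl l' hl'
      have e2 : B w l' = 0 := (hL'ker l' hl').2
      have e3 : B l w = 0 := by rw [my_skew B halt, (hL'ker l hl).2, neg_zero]
      simp [map_add, map_smul, e1, e2, e3, halt w]
end lag

/-- Let `T` be an abelian group, `V` a finite-dimensional complex vector
space with a nondegenerate alternating bilinear form `B`, and `ρ : T → GL(V)` a
representation such that every `ρ t` is an isometry of `B` and such that `V` is the sum
of its weight spaces.  Then there exist `ρ`-invariant subspaces `W` and `W'` of `V` with
`V = W ⊕ W'`, with `B` vanishing identically on `W × W` and on `W' × W'`, and such that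
the map sending `w' ∈ W'` to the linear functional `B (·, w')` on `W` is a `T`-equivariant
isomorphism from `W'` onto the dual representation of `W`. -/
theorem symplectic_torus_rep_is_distinguished_polarization
    (T : Type*) [CommGroup T]
    (V : Type*) [AddCommGroup V] [Module ℂ V] [FiniteDimensional ℂ V]
    (B : V →ₗ[ℂ] V →ₗ[ℂ] ℂ)
    (halt : ∀ v : V, B v v = 0)
    (hB : ∀ v : V, (∀ w : V, B v w = 0) → v = 0)
    (ρ : T →* (V ≃ₗ[ℂ] V))
    (hiso : ∀ (t : T) (v w : V), B (ρ t v) (ρ t w) = B v w)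
    (hwt : (⨆ χ : T →* ℂˣ, weightSpace ρ χ) = ⊤) :
    ∃ (W W' : Submodule ℂ V)
      (hW : ∀ t : T, ∀ v ∈ W, ρ t v ∈ W)
      (hW' : ∀ t : T, ∀ v ∈ W', ρ t v ∈ W'),
      IsCompl W W' ∧
      (∀ x ∈ W, ∀ y ∈ W, B x y = 0) ∧
      (∀ x ∈ W', ∀ y ∈ W', B x y = 0) ∧
      ∃ e : W' ≃ₗ[ℂ] Module.Dual ℂ W,
        (∀ (w' : W') (w : W), e w' w = B w w') ∧
        (∀ (t : T) (w' : W') (w : W),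
          e ⟨ρ t ↑w', hW' t ↑w' w'.2⟩ w = e w' ⟨ρ t⁻¹ ↑w, hW t⁻¹ ↑w w.2⟩) := by
  classical
  letI : LinearOrder (T →* ℂˣ) := IsWellOrder.linearOrder WellOrderingRel
  -- orthogonality of weight spaces for non-inverse characters
  have horth : ∀ χ ψ : T →* ℂˣ, χ * ψ ≠ 1 →
      ∀ v ∈ weightSpace ρ χ, ∀ w ∈ weightSpace ρ ψ, B v w = 0 := by
    intro χ ψ h v hv w hw
    have ht : ∃ t, χ t * ψ t ≠ 1 := by
      by_contra hcon; push_neg at hcon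
      exact h (MonoidHom.ext fun t => by simpa using hcon t)
    obtain ⟨t, ht⟩ := ht
    have h2 : B v w = ((χ t : ℂ) * (ψ t : ℂ)) * B v w := by
      conv_lhs => rw [← hiso t v w]
      rw [hv t, hw t]
      simp only [map_smul, LinearMap.smul_apply, smul_eq_mul]
      ring
    have hne : ((χ t : ℂ) * (ψ t : ℂ)) ≠ 1 := by
      intro hh
      exact ht (Units.ext (by push_cast; exact hh))
    have h3 : (1 - ((χ t : ℂ) * (ψ t : ℂ))) * B v w = 0 := by linear_combination h2
    rcases mul_eq_zero.mp h3 with h4 | h4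
    · exact absurd (by linear_combination -h4) hne
    · exact h4
  -- Lagrangian decomposition of each weight space
  have hlag := fun χ : T →* ℂˣ =>
    lag_aux B halt (finrank ℂ (weightSpace ρ χ)) (weightSpace ρ χ) le_rfl
  choose L L' hLle hL'le hLsup hisoL hisoL' using hlag
  -- the W and W' pieces for each character
  set f : (T →* ℂˣ) → Submodule ℂ V := fun χ =>
    if χ * χ = 1 then L χ else if χ < χ⁻¹ then weightSpace ρ χ else ⊥ with hf
  set g : (T →* ℂˣ) → Submodule ℂ V := fun χ =>
    if χ * χ = 1 then L' χ else if χ < χ⁻¹ then ⊥ else weightSpace ρ χ with hg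
  have hfle : ∀ χ, f χ ≤ weightSpace ρ χ := by
    intro χ; rw [hf]; dsimp only
    split_ifs with h1 h2
    · exact hLle χ
    · exact le_rfl
    · exact bot_le
  have hgle : ∀ χ, g χ ≤ weightSpace ρ χ := by
    intro χ; rw [hg]; dsimp only
    split_ifs with h1 h2
    · exact hL'le χ
    · exact bot_le
    · exact le_rfl
  have hfg : ∀ χ, f χ ⊔ g χ = weightSpace ρ χ := by
    intro χ; rw [hf, hg]; dsimp only
    split_ifs with h1 h2
    · exact hLsup χ
    · exact sup_bot_eq _
    · exact bot_sup_eq _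
  -- pairwise isotropy of the f's
  have hisof : ∀ χ ψ : T →* ℂˣ, ∀ x ∈ f χ, ∀ y ∈ f ψ, B x y = 0 := by
    intro χ ψ x hx y hy
    by_cases hχψ : χ * ψ = 1
    · have hψ : ψ = χ⁻¹ := eq_inv_of_mul_eq_one_left (a := ψ) (b := χ) ((mul_comm χ ψ) ▸ hχψ)
      subst hψ
      by_cases hself : χ * χ = 1
      · have hinv : χ⁻¹ = χ := inv_eq_of_mul_eq_one_right (G := T →* ℂˣ) hself
        rw [hinv] at hy
        rw [hf] at hx hy; dsimp only at hx hy
        rw [if_pos hself] at hx hy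
        exact hisoL χ x hx y hy
      · have hself' : χ⁻¹ * χ⁻¹ ≠ 1 := by
          intro hh
          refine hself ?_
          have := congrArg (fun z : T →* ℂˣ => z⁻¹) hh
          have h2 : (χ * χ)⁻¹ = (1 : T →* ℂˣ) := (mul_inv χ χ).trans hh
          exact (inv_eq_one (a := χ * χ)).mp h2
        rw [hf] at hx hy; dsimp only at hx hy
        rw [if_neg hself] at hx
        rw [if_neg hself'] at hy
        by_cases hlt : χ < χ⁻¹
        · have : ¬ (χ⁻¹ < (χ⁻¹)⁻¹) := by
            rw [inv_inv χ]; exact lt_asymm hlt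
          rw [if_neg this] at hy
          simp only [Submodule.mem_bot] at hy
          rw [hy, map_zero]
        · rw [if_neg hlt] at hx
          simp only [Submodule.mem_bot] at hx
          rw [hx, map_zero, LinearMap.zero_apply]
    · exact horth χ ψ hχψ x (hfle χ hx) y (hfle ψ hy)
  have hisog : ∀ χ ψ : T →* ℂˣ, ∀ x ∈ g χ, ∀ y ∈ g ψ, B x y = 0 := by
    intro χ ψ x hx y hy
    by_cases hχψ : χ * ψ = 1
    · have hψ : ψ = χ⁻¹ := eq_inv_of_mul_eq_one_left (a := ψ) (b := χ) ((mul_comm χ ψ) ▸ hχψ)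
      subst hψ
      by_cases hself : χ * χ = 1
      · have hinv : χ⁻¹ = χ := inv_eq_of_mul_eq_one_right (G := T →* ℂˣ) hself
        rw [hinv] at hy
        rw [hg] at hx hy; dsimp only at hx hy
        rw [if_pos hself] at hx hy
        exact hisoL' χ x hx y hy
      · have hself' : χ⁻¹ * χ⁻¹ ≠ 1 := by
          intro hh
          refine hself ?_
          have := congrArg (fun z : T →* ℂˣ => z⁻¹) hh
          have h2 : (χ * χ)⁻¹ = (1 : T →* ℂˣ) := (mul_inv χ χ).trans hh
          exact (inv_eq_one (a := χ * χ)).mp h2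
        rw [hg] at hx hy; dsimp only at hx hy
        rw [if_neg hself] at hx
        rw [if_neg hself'] at hy
        by_cases hlt : χ < χ⁻¹
        · rw [if_pos hlt] at hx
          simp only [Submodule.mem_bot] at hx
          rw [hx, map_zero, LinearMap.zero_apply]
        · have hne : χ ≠ χ⁻¹ := by
            intro h
            refine hself ?_
            nth_rewrite 2 [h]
            exact mul_inv_cancel χ
          have hlt' : χ⁻¹ < (χ⁻¹)⁻¹ := by
            rw [inv_inv χ]
            rcases lt_trichotomy χ χ⁻¹ with h | h | h
            · exact absurd h hlt
            · exact absurd h hne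
            · exact h
          rw [if_pos hlt'] at hy
          simp only [Submodule.mem_bot] at hy
          rw [hy, map_zero]
    · exact horth χ ψ hχψ x (hgle χ hx) y (hgle ψ hy)
  set W : Submodule ℂ V := ⨆ χ, f χ with hWdef
  set W' : Submodule ℂ V := ⨆ χ, g χ with hW'def
  have hsupWW' : W ⊔ W' = ⊤ := by
    rw [hWdef, hW'def, ← iSup_sup_eq, ← hwt]
    exact iSup_congr hfg
  -- isotropy of W and W'
  have hWker : ∀ χ, ∀ x ∈ f χ, W ≤ LinearMap.ker (B x) := by
    intro χ x hx
    rw [hWdef]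
    exact iSup_le fun ψ y hy => LinearMap.mem_ker.mpr (hisof χ ψ x hx y hy)
  have hW'ker : ∀ χ, ∀ x ∈ g χ, W' ≤ LinearMap.ker (B x) := by
    intro χ x hx
    rw [hW'def]
    exact iSup_le fun ψ y hy => LinearMap.mem_ker.mpr (hisog χ ψ x hx y hy)
  have hisoW : ∀ x ∈ W, ∀ y ∈ W, B x y = 0 := by
    intro x hx y hy
    have hle : W ≤ LinearMap.ker (B.flip y) := by
      rw [hWdef]
      refine iSup_le fun χ z hz => LinearMap.mem_ker.mpr ?_
      rw [LinearMap.flip_apply]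
      exact LinearMap.mem_ker.mp (hWker χ z hz hy)
    have := hle hx
    rwa [LinearMap.mem_ker, LinearMap.flip_apply] at this
  have hisoW' : ∀ x ∈ W', ∀ y ∈ W', B x y = 0 := by
    intro x hx y hy
    have hle : W' ≤ LinearMap.ker (B.flip y) := by
      rw [hW'def]
      refine iSup_le fun χ z hz => LinearMap.mem_ker.mpr ?_
      rw [LinearMap.flip_apply]
      exact LinearMap.mem_ker.mp (hW'ker χ z hz hy)
    have := hle hx
    rwa [LinearMap.mem_ker, LinearMap.flip_apply] at this
  -- invariance
  have hWinv : ∀ t : T, ∀ v ∈ W, ρ t v ∈ W := by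
    intro t v hv
    rw [hWdef] at hv ⊢
    refine Submodule.iSup_induction f (motive := fun v => ρ t v ∈ ⨆ χ, f χ) hv ?_ ?_ ?_
    · intro χ x hx
      have : ρ t x = (χ t : ℂ) • x := hfle χ hx t
      rw [this]
      exact Submodule.mem_iSup_of_mem χ (Submodule.smul_mem _ _ hx)
    · show ρ t (0 : V) ∈ _
      rw [map_zero]; exact Submodule.zero_mem _
    · intro x y hx hy
      rw [map_add]; exact Submodule.add_mem _ hx hy
  have hW'inv : ∀ t : T, ∀ v ∈ W', ρ t v ∈ W' := by
    intro t v hv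
    rw [hW'def] at hv ⊢
    refine Submodule.iSup_induction g (motive := fun v => ρ t v ∈ ⨆ χ, g χ) hv ?_ ?_ ?_
    · intro χ x hx
      have : ρ t x = (χ t : ℂ) • x := hgle χ hx t
      rw [this]
      exact Submodule.mem_iSup_of_mem χ (Submodule.smul_mem _ _ hx)
    · show ρ t (0 : V) ∈ _
      rw [map_zero]; exact Submodule.zero_mem _
    · intro x y hx hy
      rw [map_add]; exact Submodule.add_mem _ hx hy
  -- B kills v against everything if it kills v against W and W'
  have hkill : ∀ v : V, (∀ a ∈ W, B v a = 0) → (∀ b ∈ W', B v b = 0) → v = 0 := by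
    intro v h1 h2
    refine hB v fun w => ?_
    have hw : w ∈ W ⊔ W' := by rw [hsupWW']; exact Submodule.mem_top
    obtain ⟨a, ha, b, hb, rfl⟩ := Submodule.mem_sup.mp hw
    rw [map_add, h1 a ha, h2 b hb, add_zero]
  have hdisj : Disjoint W W' := by
    rw [disjoint_iff, eq_bot_iff]
    intro v hv
    rw [Submodule.mem_inf] at hv
    rw [Submodule.mem_bot]
    exact hkill v (fun a ha => hisoW v hv.1 a ha) (fun b hb => hisoW' v hv.2 b hb)
  have hcompl : IsCompl W W' := ⟨hdisj, codisjoint_iff.mpr hsupWW'⟩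
  -- the pairing maps
  set φ : W' →ₗ[ℂ] Module.Dual ℂ W := (B.compl₁₂ W.subtype W'.subtype).flip with hφdef
  set φ' : W →ₗ[ℂ] Module.Dual ℂ W' := (B.compl₁₂ W'.subtype W.subtype).flip with hφ'def
  have hφapp : ∀ (w' : W') (w : W), φ w' w = B (w : V) (w' : V) := fun w' w => rfl
  have hφ'app : ∀ (w : W) (w' : W'), φ' w w' = B (w' : V) (w : V) := fun w w' => rfl
  have hφinj : Function.Injective φ := by
    rw [← LinearMap.ker_eq_bot, eq_bot_iff]
    intro w' hw'
    have h0 : φ w' = 0 := LinearMap.mem_ker.mp hw'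
    rw [Submodule.mem_bot]
    refine Subtype.ext (hkill (w' : V) ?_ ?_)
    · intro a ha
      rw [my_skew B halt]
      have : φ w' ⟨a, ha⟩ = 0 := by rw [h0]; rfl
      rw [hφapp w' ⟨a, ha⟩] at this
      rw [this, neg_zero]
    · intro b hb
      exact hisoW' (w' : V) w'.2 b hb
  have hφ'inj : Function.Injective φ' := by
    rw [← LinearMap.ker_eq_bot, eq_bot_iff]
    intro w hw
    have h0 : φ' w = 0 := LinearMap.mem_ker.mp hw
    rw [Submodule.mem_bot]
    refine Subtype.ext (hkill (w : V) ?_ ?_)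
    · intro a ha
      exact hisoW (w : V) w.2 a ha
    · intro b hb
      rw [my_skew B halt]
      have : φ' w ⟨b, hb⟩ = 0 := by rw [h0]; rfl
      rw [hφ'app w ⟨b, hb⟩] at this
      rw [this, neg_zero]
  have hr1 : finrank ℂ W' ≤ finrank ℂ W := by
    have := LinearMap.finrank_le_finrank_of_injective hφinj
    rwa [Subspace.dual_finrank_eq] at this
  have hr2 : finrank ℂ W ≤ finrank ℂ W' := by
    have := LinearMap.finrank_le_finrank_of_injective hφ'inj
    rwa [Subspace.dual_finrank_eq] at this
  have hrank : finrank ℂ W' = finrank ℂ (Module.Dual ℂ W) := by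
    rw [Subspace.dual_finrank_eq]; omega
  set e := LinearMap.linearEquivOfInjective φ hφinj hrank with hedef
  have hept : ∀ (w' : W') (w : W), e w' w = B (w : V) (w' : V) := fun w' w => rfl
  refine ⟨W, W', hWinv, hW'inv, hcompl, hisoW, hisoW', e, hept, ?_⟩
  intro t w' w
  rw [hept, hept]
  have h1 : (ρ t) ((ρ t⁻¹) (w : V)) = (w : V) := by
    have h2 : ρ t * ρ t⁻¹ = 1 := by
      rw [← map_mul, mul_inv_cancel t, map_one]
    calc (ρ t) ((ρ t⁻¹) (w : V)) = (ρ t * ρ t⁻¹) (w : V) := rfl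
      _ = (w : V) := by rw [h2]; rfl
  have := hiso t ((ρ t⁻¹) (w : V)) (w' : V)
  rw [h1] at this
  exact this
end

section
/- Let T be an abelian group and let ρ and ρ' be finite-dimensional complex representations of T, each of which is isomorphic to a direct sum of one-dimensional representations. If ρ ⊕ ρ^∨ and ρ' ⊕ ρ'^∨ are isomorphic as representations of T, then there exists a group homomorphism ψ : T → ℂ^× such that det∘ρ' = (det∘ρ)·ψ² as characters of T. In particular, for any group homomorphism η : T → ℂ^×, there exists χ : T → ℂ^× with det∘ρ = χ²·η if and only if there exists χ' : T → ℂ^× with det∘ρ' = χ'²·η. -/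
/-- The weight space of a representation `ρ` of an abelian group `T` for the
character `χ : T →* ℂˣ`. -/
def wtSpace {T V : Type*} [CommGroup T] [AddCommGroup V] [Module ℂ V]
    (ρ : Representation ℂ T V) (χ : T →* ℂˣ) : Submodule ℂ V where
  carrier := {v | ∀ t : T, ρ t v = (χ t : ℂ) • v}
  add_mem' := by
    intro a b ha hb t
    simp [map_add, ha t, hb t, smul_add]
  zero_mem' := by intro t; simp
  smul_mem' := by
    intro c v hv t
    rw [map_smul, hv t, smul_comm]


section Helpers

variable {T : Type*} [CommGroup T] {V : Type*} [AddCommGroup V] [Module ℂ V]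

lemma mem_wtSpace {ρ : Representation ℂ T V} {χ : T →* ℂˣ} {v : V} :
    v ∈ wtSpace ρ χ ↔ ∀ t : T, ρ t v = (χ t : ℂ) • v := Iff.rfl

lemma wt_invariant {ρ : Representation ℂ T V} {χ : T →* ℂˣ} {v : V}
    (hv : v ∈ wtSpace ρ χ) (t : T) : ρ t v ∈ wtSpace ρ χ := by
  rw [hv t]
  exact Submodule.smul_mem _ _ hv

lemma sup_wt_invariant (ρ : Representation ℂ T V) (s : Finset (T →* ℂˣ)) (t : T) :
    ∀ v ∈ s.sup (wtSpace ρ), ρ t v ∈ s.sup (wtSpace ρ) := by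
  classical
  induction s using Finset.induction_on with
  | empty => intro v hv; simp only [Finset.sup_empty, Submodule.mem_bot] at hv ⊢; simp [hv]
  | @insert χ₀ s' hχ₀ ih =>
    intro v hv
    rw [Finset.sup_insert, Submodule.mem_sup] at hv ⊢
    obtain ⟨a, ha, b, hb, rfl⟩ := hv
    exact ⟨ρ t a, wt_invariant ha t, ρ t b, ih b hb, (map_add _ _ _).symm⟩

lemma wt_disjoint_sup (ρ : Representation ℂ T V) (s : Finset (T →* ℂˣ)) :
    ∀ χ ∉ s, ∀ v ∈ wtSpace ρ χ, v ∈ s.sup (wtSpace ρ) → v = 0 := by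
  classical
  induction s using Finset.induction_on with
  | empty => intro χ _ v _ hv; simpa using hv
  | @insert χ₀ s' hχ₀ ih =>
    intro χ hχ v hvχ hv
    rw [Finset.sup_insert, Submodule.mem_sup] at hv
    obtain ⟨a, ha, b, hb, hab⟩ := hv
    have hne : χ ≠ χ₀ := fun h => hχ (h ▸ Finset.mem_insert_self _ _)
    obtain ⟨t, ht⟩ : ∃ t, χ t ≠ χ₀ t := by
      by_contra h
      push_neg at h
      exact hne (MonoidHom.ext h)
    have htC : (χ t : ℂ) ≠ (χ₀ t : ℂ) := fun h => ht (Units.ext h)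
    have hu1 : ρ t v - (χ₀ t : ℂ) • v = ((χ t : ℂ) - (χ₀ t : ℂ)) • v := by
      rw [hvχ t, sub_smul]
    have hu2 : ρ t v - (χ₀ t : ℂ) • v = ρ t b - (χ₀ t : ℂ) • b := by
      rw [← hab, map_add, smul_add, ha t]
      abel
    have hmem : ((χ t : ℂ) - (χ₀ t : ℂ)) • v ∈ s'.sup (wtSpace ρ) := by
      rw [← hu1, hu2]
      exact Submodule.sub_mem _ (sup_wt_invariant ρ s' t b hb) (Submodule.smul_mem _ _ hb)
    have hmemχ : ((χ t : ℂ) - (χ₀ t : ℂ)) • v ∈ wtSpace ρ χ := Submodule.smul_mem _ _ hvχ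
    have hz := ih χ (fun h => hχ (Finset.mem_insert_of_mem h)) _ hmemχ hmem
    have := smul_eq_zero.mp hz
    rcases this with h | h
    · exact absurd (sub_eq_zero.mp h) htC
    · exact h

end Helpers

section Helpers2

variable {T : Type*} [CommGroup T] {V : Type*} [AddCommGroup V] [Module ℂ V]

lemma exists_adapted_basis (ρ : Representation ℂ T V) [FiniteDimensional ℂ V]
    (hρ : (⨆ χ : T →* ℂˣ, wtSpace ρ χ) = ⊤) :
    ∃ (s : Set V) (_ : s.Finite) (b : Module.Basis s ℂ V) (w : s → (T →* ℂˣ)),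
      ∀ (i : s) (t : T), ρ t (b i) = ((w i t : ℂ)) • b i := by
  classical
  have hspan : Submodule.span ℂ (⋃ χ : T →* ℂˣ, (wtSpace ρ χ : Set V)) = ⊤ := by
    rw [← Submodule.iSup_eq_span, hρ]
  obtain ⟨b, hbsub, hbspan, hbli⟩ :=
    exists_linearIndependent ℂ (⋃ χ : T →* ℂˣ, (wtSpace ρ χ : Set V))
  rw [hspan] at hbspan
  have hfin : b.Finite := hbli.setFinite
  have hw : ∀ i : b, ∃ χ : T →* ℂˣ, (i : V) ∈ wtSpace ρ χ := by
    intro i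
    have := hbsub i.2
    simpa [Set.mem_iUnion] using this
  choose w hwmem using hw
  refine ⟨b, hfin, Module.Basis.mk hbli ?_, w, ?_⟩
  · rw [Subtype.range_coe, ← hbspan]
  · intro i t
    simp only [Module.Basis.mk_apply]
    exact hwmem i t

lemma det_eq_prod_of_adapted (ρ : Representation ℂ T V) {ι : Type*} [Fintype ι] [DecidableEq ι]
    (b : Module.Basis ι ℂ V) (w : ι → (T →* ℂˣ))
    (hb : ∀ (i : ι) (t : T), ρ t (b i) = ((w i t : ℂ)) • b i) (t : T) :
    LinearMap.det (ρ t) = ∏ i, (w i t : ℂ) := by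
  rw [← LinearMap.det_toMatrix b]
  have hmat : LinearMap.toMatrix b b (ρ t) = Matrix.diagonal (fun i => (w i t : ℂ)) := by
    ext i j
    rw [LinearMap.toMatrix_apply, hb j t, map_smul]
    simp [Module.Basis.repr_self, Finsupp.single_apply, Matrix.diagonal]
    by_cases h : i = j
    · subst h; simp
    · simp [h, Ne.symm h]
  rw [hmat, Matrix.det_diagonal]

lemma count_eq_finrank (ρ : Representation ℂ T V) [FiniteDimensional ℂ V]
    {ι : Type*} [Fintype ι] [DecidableEq ι]
    (b : Module.Basis ι ℂ V) (w : ι → (T →* ℂˣ))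
    (hb : ∀ (i : ι) (t : T), ρ t (b i) = ((w i t : ℂ)) • b i) (χ : T →* ℂˣ) :
    Nat.card {i // w i = χ} = Module.finrank ℂ (wtSpace ρ χ) := by
  classical
  set A : Submodule ℂ V := Submodule.span ℂ (Set.range fun i : {i // w i = χ} => b i) with hA
  set B : Submodule ℂ V := Submodule.span ℂ (Set.range fun i : {i // w i ≠ χ} => b i) with hB
  have hbwt : ∀ i : ι, b i ∈ wtSpace ρ (w i) := fun i t => hb i t
  have hAle : A ≤ wtSpace ρ χ := by
    rw [hA, Submodule.span_le]
    rintro _ ⟨i, rfl⟩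
    have := hbwt i.1
    rwa [i.2] at this
  set s : Finset (T →* ℂˣ) := (Finset.univ.image w).erase χ with hs
  have hBle : B ≤ s.sup (wtSpace ρ) := by
    rw [hB, Submodule.span_le]
    rintro _ ⟨i, rfl⟩
    have hmem : w i.1 ∈ s :=
      Finset.mem_erase.mpr ⟨i.2, Finset.mem_image_of_mem _ (Finset.mem_univ _)⟩
    exact Finset.le_sup (f := wtSpace ρ) hmem (hbwt i.1)
  have hχs : χ ∉ s := Finset.notMem_erase _ _
  have hdisjwt : wtSpace ρ χ ⊓ B = ⊥ := by
    rw [eq_bot_iff]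
    rintro v ⟨hv1, hv2⟩
    exact wt_disjoint_sup ρ s χ hχs v hv1 (hBle hv2)
  have hdisjA : A ⊓ B = ⊥ := by
    rw [eq_bot_iff]
    rintro v ⟨hv1, hv2⟩
    exact hdisjwt.le ⟨hAle hv1, hv2⟩
  have hsupAB : A ⊔ B = ⊤ := by
    rw [eq_top_iff, ← b.span_eq, Submodule.span_le]
    rintro _ ⟨i, rfl⟩
    by_cases h : w i = χ
    · exact Submodule.mem_sup_left (Submodule.subset_span ⟨⟨i, h⟩, rfl⟩)
    · exact Submodule.mem_sup_right (Submodule.subset_span ⟨⟨i, h⟩, rfl⟩)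
  have hsupwt : wtSpace ρ χ ⊔ B = ⊤ := by
    rw [eq_top_iff, ← hsupAB]
    exact sup_le_sup_right hAle B
  have hrA : Module.finrank ℂ A = Nat.card {i // w i = χ} := by
    rw [hA, show (Set.range fun i : {i // w i = χ} => b i) = Set.range (⇑b ∘ Subtype.val)
        from rfl,
      finrank_span_eq_card (b.linearIndependent.comp _ Subtype.val_injective),
      Nat.card_eq_fintype_card]
  have e1 := Submodule.finrank_sup_add_finrank_inf_eq A B
  have e2 := Submodule.finrank_sup_add_finrank_inf_eq (wtSpace ρ χ) B
  rw [hsupAB, hdisjA] at e1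
  rw [hsupwt, hdisjwt] at e2
  simp only [finrank_bot] at e1 e2
  omega

end Helpers2

section Helpers3

variable {T : Type*} [CommGroup T] {V : Type*} [AddCommGroup V] [Module ℂ V]

lemma dual_adapted (ρ : Representation ℂ T V) [FiniteDimensional ℂ V]
    {ι : Type*} [Fintype ι] [DecidableEq ι]
    (b : Module.Basis ι ℂ V) (w : ι → (T →* ℂˣ))
    (hb : ∀ (i : ι) (t : T), ρ t (b i) = ((w i t : ℂ)) • b i) :
    ∀ (i : ι) (t : T), ρ.dual t (b.dualBasis i) = (((w i)⁻¹ t : ℂ)) • b.dualBasis i := by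
  intro i t
  apply b.ext
  intro j
  rw [Representation.dual_apply]
  simp only [Module.Dual.transpose_apply, LinearMap.smul_apply, LinearMap.comp_apply]
  rw [hb j t⁻¹, map_smul]
  simp only [Module.Basis.dualBasis_apply_self, smul_eq_mul]
  by_cases h : j = i
  · subst h
    simp only [if_pos rfl, mul_one]
    simp [MonoidHom.inv_apply]
  · simp [h]

/-- Package: support finset, dual weight dimensions, and the determinant formula. -/
lemma exists_detSupport (ρ : Representation ℂ T V) [FiniteDimensional ℂ V]
    (hρ : (⨆ χ : T →* ℂˣ, wtSpace ρ χ) = ⊤) :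
    ∃ s : Finset (T →* ℂˣ),
      (∀ χ ∉ s, Module.finrank ℂ (wtSpace ρ χ) = 0) ∧
      (∀ χ : T →* ℂˣ,
        Module.finrank ℂ (wtSpace ρ.dual χ) = Module.finrank ℂ (wtSpace ρ χ⁻¹)) ∧
      (∀ t : T, LinearMap.det (ρ t)
        = ∏ χ ∈ s, (χ t : ℂ) ^ (Module.finrank ℂ (wtSpace ρ χ))) := by
  classical
  obtain ⟨bs, hfin, b, w, hb⟩ := exists_adapted_basis ρ hρ
  haveI : Fintype bs := hfin.fintype
  refine ⟨Finset.univ.image w, ?_, ?_, ?_⟩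
  · intro χ hχ
    rw [← count_eq_finrank ρ b w hb χ, Nat.card_eq_fintype_card, Fintype.card_eq_zero_iff]
    exact ⟨fun i => hχ (i.2 ▸ Finset.mem_image_of_mem _ (Finset.mem_univ i.1))⟩
  · intro χ
    have hdual := dual_adapted ρ b w hb
    rw [← count_eq_finrank ρ.dual b.dualBasis (fun i => (w i)⁻¹) hdual χ,
      ← count_eq_finrank ρ b w hb χ⁻¹]
    apply Nat.card_congr
    refine Equiv.subtypeEquivRight (fun i => ⟨fun h => ?_, fun h => ?_⟩)
    · ext t
      have h2 := DFunLike.congr_fun h t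
      rw [show ((w i)⁻¹) t = (w i t)⁻¹ from rfl] at h2
      rw [show (χ⁻¹) t = (χ t)⁻¹ from rfl, ← h2, inv_inv]
    · ext t
      have h2 := DFunLike.congr_fun h t
      rw [show (χ⁻¹) t = (χ t)⁻¹ from rfl] at h2
      rw [show ((w i)⁻¹) t = (w i t)⁻¹ from rfl, h2, inv_inv]
  · intro t
    rw [det_eq_prod_of_adapted ρ b w hb t, Finset.prod_comp (fun χ : T →* ℂˣ => (χ t : ℂ)) w]
    apply Finset.prod_congr rfl
    intro χ hχ
    congr 1
    rw [← count_eq_finrank ρ b w hb χ, Nat.card_eq_fintype_card, Fintype.card_subtype]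

end Helpers3

section Helpers4

variable {R M N : Type*} [Field R] [AddCommGroup M] [AddCommGroup N] [Module R M] [Module R N]

def subProdEquiv (p : Submodule R M) (q : Submodule R N) : (p.prod q) ≃ₗ[R] (p × q) where
  toFun x := (⟨x.1.1, (Submodule.mem_prod.mp x.2).1⟩, ⟨x.1.2, (Submodule.mem_prod.mp x.2).2⟩)
  map_add' x y := rfl
  map_smul' c x := rfl
  invFun y := ⟨(y.1.1, y.2.1), Submodule.mem_prod.mpr ⟨y.1.2, y.2.2⟩⟩
  left_inv x := rfl
  right_inv y := rfl

lemma finrank_subProd [FiniteDimensional R M] [FiniteDimensional R N]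
    (p : Submodule R M) (q : Submodule R N) :
    Module.finrank R (p.prod q) = Module.finrank R p + Module.finrank R q := by
  rw [(subProdEquiv p q).finrank_eq, Module.finrank_prod]

end Helpers4



/-- Let `T` be an abelian group and `ρ, ρ'` finite-dimensional complex
representations of `T`, each a direct sum of one-dimensional representations (i.e. each
is the sum of its weight spaces).  If `ρ ⊕ ρ^∨ ≅ ρ' ⊕ ρ'^∨` as representations of `T`,
then there is a homomorphism `ψ : T → ℂˣ` with `det ∘ ρ' = (det ∘ ρ) · ψ²`.  In
particular, for any `η : T → ℂˣ` there exists `χ` with `det ∘ ρ = χ² · η` iff there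
exists `χ'` with `det ∘ ρ' = χ'² · η`. -/
theorem det_square_class_independent_of_polarization
    (T : Type*) [CommGroup T]
    (V V' : Type*) [AddCommGroup V] [Module ℂ V] [FiniteDimensional ℂ V]
    [AddCommGroup V'] [Module ℂ V'] [FiniteDimensional ℂ V']
    (ρ : Representation ℂ T V) (ρ' : Representation ℂ T V')
    (hρ : (⨆ χ : T →* ℂˣ, wtSpace ρ χ) = ⊤)
    (hρ' : (⨆ χ : T →* ℂˣ, wtSpace ρ' χ) = ⊤)
    (e : (V × Module.Dual ℂ V) ≃ₗ[ℂ] (V' × Module.Dual ℂ V'))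
    (he : ∀ (t : T) (p : V × Module.Dual ℂ V),
      e (ρ t p.1, ρ.dual t p.2) = (ρ' t (e p).1, ρ'.dual t (e p).2)) :
    (∃ ψ : T →* ℂˣ, ∀ t : T,
      LinearMap.det (ρ' t) = LinearMap.det (ρ t) * (ψ t : ℂ) ^ 2) ∧
    (∀ η : T →* ℂˣ,
      (∃ χ : T →* ℂˣ, ∀ t : T, LinearMap.det (ρ t) = (χ t : ℂ) ^ 2 * (η t : ℂ)) ↔
      (∃ χ' : T →* ℂˣ, ∀ t : T, LinearMap.det (ρ' t) = (χ' t : ℂ) ^ 2 * (η t : ℂ))) := by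
  classical
  have hinvinv : ∀ χ : T →* ℂˣ, χ⁻¹⁻¹ = χ := fun χ => MonoidHom.ext fun t => inv_inv (χ t)
  obtain ⟨s₁, hs₁supp, hs₁dual, hs₁det⟩ := exists_detSupport ρ hρ
  obtain ⟨s₂, hs₂supp, hs₂dual, hs₂det⟩ := exists_detSupport ρ' hρ'
  set D : (T →* ℂˣ) → ℕ := fun χ => Module.finrank ℂ (wtSpace ρ χ) with hD
  set D' : (T →* ℂˣ) → ℕ := fun χ => Module.finrank ℂ (wtSpace ρ' χ) with hD'
  -- the inverse equivalence also intertwines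
  have hesymm : ∀ (t : T) (q : V' × Module.Dual ℂ V'),
      e.symm (ρ' t q.1, ρ'.dual t q.2) = (ρ t (e.symm q).1, ρ.dual t (e.symm q).2) := by
    intro t q
    apply e.injective
    have h1 := he t (e.symm q)
    rw [e.apply_symm_apply] at h1
    rw [e.apply_symm_apply, h1]
  -- e maps product weight spaces onto product weight spaces
  have hmap : ∀ χ : T →* ℂˣ, Submodule.map (e : (V × Module.Dual ℂ V) →ₗ[ℂ] _)
      ((wtSpace ρ χ).prod (wtSpace ρ.dual χ))
        = (wtSpace ρ' χ).prod (wtSpace ρ'.dual χ) := by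
    intro χ
    apply le_antisymm
    · rintro _ ⟨p, hp, rfl⟩
      simp only [SetLike.mem_coe, Submodule.mem_prod, LinearEquiv.coe_coe] at hp ⊢
      have key : ∀ t : T, (ρ' t (e p).1, ρ'.dual t (e p).2)
          = (χ t : ℂ) • (e p) := by
        intro t
        have h1 := he t p
        rw [hp.1 t, hp.2 t] at h1
        have h2 : (((χ t : ℂ) • p.1, (χ t : ℂ) • p.2) : V × Module.Dual ℂ V)
            = (χ t : ℂ) • p := rfl
        rw [h2, map_smul] at h1
        exact h1.symm
      exact ⟨fun t => congrArg Prod.fst (key t), fun t => congrArg Prod.snd (key t)⟩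
    · intro q hq
      rw [Submodule.mem_prod] at hq
      refine ⟨e.symm q, ?_, e.apply_symm_apply q⟩
      simp only [SetLike.mem_coe, Submodule.mem_prod]
      have key : ∀ t : T, (ρ t (e.symm q).1, ρ.dual t (e.symm q).2)
          = (χ t : ℂ) • (e.symm q) := by
        intro t
        have h1 := hesymm t q
        rw [hq.1 t, hq.2 t] at h1
        have h2 : (((χ t : ℂ) • q.1, (χ t : ℂ) • q.2) : V' × Module.Dual ℂ V')
            = (χ t : ℂ) • q := rfl
        rw [h2, map_smul] at h1
        exact h1.symm
      exact ⟨fun t => congrArg Prod.fst (key t), fun t => congrArg Prod.snd (key t)⟩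
  have key : ∀ χ : T →* ℂˣ, D χ + D χ⁻¹ = D' χ + D' χ⁻¹ := by
    intro χ
    have h1 := LinearEquiv.finrank_map_eq e ((wtSpace ρ χ).prod (wtSpace ρ.dual χ))
    rw [hmap χ, finrank_subProd, finrank_subProd, hs₁dual χ, hs₂dual χ] at h1
    simp only [hD, hD']
    omega
  set a : (T →* ℂˣ) → ℤ := fun χ => (D' χ : ℤ) - D χ with ha
  have ha_inv : ∀ χ, a χ⁻¹ = - a χ := by
    intro χ
    have h1 := key χ
    simp only [ha]
    omega
  set s : Finset (T →* ℂˣ) := (s₁ ∪ s₂) ∪ (s₁ ∪ s₂).image (fun χ => χ⁻¹) with hsdef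
  have hsinv : ∀ χ ∈ s, χ⁻¹ ∈ s := by
    intro χ hχ
    rw [hsdef, Finset.mem_union] at hχ ⊢
    rcases hχ with h | h
    · exact Or.inr (Finset.mem_image_of_mem _ h)
    · rw [Finset.mem_image] at h
      obtain ⟨y, hy, rfl⟩ := h
      rw [hinvinv]
      exact Or.inl hy
  have hs₁s : s₁ ⊆ s := fun χ h =>
    Finset.mem_union_left _ (Finset.mem_union_left _ h)
  have hs₂s : s₂ ⊆ s := fun χ h =>
    Finset.mem_union_left _ (Finset.mem_union_right _ h)
  have hdets : ∀ t : T, LinearMap.det (ρ t) = ∏ χ ∈ s, (χ t : ℂ) ^ D χ := by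
    intro t
    rw [hs₁det t]
    exact Finset.prod_subset hs₁s (fun χ _ hχ => by rw [hs₁supp χ hχ, pow_zero])
  have hdets' : ∀ t : T, LinearMap.det (ρ' t) = ∏ χ ∈ s, (χ t : ℂ) ^ D' χ := by
    intro t
    rw [hs₂det t]
    exact Finset.prod_subset hs₂s (fun χ _ hχ => by rw [hs₂supp χ hχ, pow_zero])
  letI : LinearOrder (T →* ℂˣ) := IsWellOrder.linearOrder WellOrderingRel
  set F : Finset (T →* ℂˣ) := s.filter (fun χ => χ < χ⁻¹) with hF
  set ψ : T →* ℂˣ :=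
    { toFun := fun t => ∏ χ ∈ F, (χ t) ^ (a χ)
      map_one' := by simp
      map_mul' := fun x y => by
        simp only [map_mul, mul_zpow, Finset.prod_mul_distrib] } with hψ
  have hmain : ∀ t : T, LinearMap.det (ρ' t) = LinearMap.det (ρ t) * (ψ t : ℂ) ^ 2 := by
    intro t
    set g : (T →* ℂˣ) → ℂˣ := fun χ => (χ t) ^ (a χ) with hg
    have hginv : ∀ χ, g χ⁻¹ = g χ := by
      intro χ
      show ((χ⁻¹ : T →* ℂˣ) t) ^ (a χ⁻¹) = (χ t) ^ (a χ)
      rw [ha_inv χ, show (χ⁻¹ : T →* ℂˣ) t = (χ t)⁻¹ from rfl, zpow_neg, ← inv_zpow, inv_inv]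
    have hgfix : ∀ χ : T →* ℂˣ, χ⁻¹ = χ → g χ = 1 := by
      intro χ h
      have h0 : a χ = 0 := by
        have h1 := ha_inv χ
        rw [h] at h1
        omega
      show (χ t) ^ (a χ) = 1
      rw [h0, zpow_zero]
    have hsplit : ∏ χ ∈ s, g χ = (∏ χ ∈ F, g χ) ^ 2 := by
      have h1 : ∏ χ ∈ s, g χ
          = (∏ χ ∈ F, g χ) * ∏ χ ∈ s.filter (fun χ => ¬ χ < χ⁻¹), g χ :=
        (Finset.prod_filter_mul_prod_filter_not s _ g).symm
      have h2 : ∏ χ ∈ (s.filter (fun χ => ¬ χ < χ⁻¹)).filter (fun χ => χ⁻¹ < χ), g χ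
          = ∏ χ ∈ s.filter (fun χ => ¬ χ < χ⁻¹), g χ := by
        apply Finset.prod_filter_of_ne
        intro χ hχ hgχ
        rw [Finset.mem_filter] at hχ
        rcases lt_trichotomy χ χ⁻¹ with h | h | h
        · exact absurd h hχ.2
        · exact absurd (hgfix χ h.symm) hgχ
        · exact h
      have h3 : ∏ χ ∈ (s.filter (fun χ => ¬ χ < χ⁻¹)).filter (fun χ => χ⁻¹ < χ), g χ
          = ∏ χ ∈ F, g χ := by
        apply Finset.prod_nbij' (i := fun χ => χ⁻¹) (j := fun χ => χ⁻¹)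
        · intro χ hχ
          rw [Finset.mem_filter, Finset.mem_filter] at hχ
          rw [hF, Finset.mem_filter]
          refine ⟨hsinv χ hχ.1.1, ?_⟩
          rw [hinvinv]
          exact hχ.2
        · intro χ hχ
          rw [hF, Finset.mem_filter] at hχ
          rw [Finset.mem_filter, Finset.mem_filter]
          refine ⟨⟨hsinv χ hχ.1, ?_⟩, ?_⟩
          · rw [hinvinv]
            exact not_lt.mpr (le_of_lt hχ.2)
          · rw [hinvinv]
            exact hχ.2
        · intro χ _; exact hinvinv χ
        · intro χ _; exact hinvinv χ
        · intro χ _; exact (hginv χ).symm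
      rw [h1, ← h2, h3, sq]
    -- move to ℂˣ and conclude
    have hval : ∀ (E : (T →* ℂˣ) → ℕ),
        ((∏ χ ∈ s, (χ t) ^ (E χ : ℤ) : ℂˣ) : ℂ) = ∏ χ ∈ s, (χ t : ℂ) ^ (E χ) := by
      intro E
      rw [show ((∏ χ ∈ s, (χ t) ^ (E χ : ℤ) : ℂˣ) : ℂ)
          = (Units.coeHom ℂ) (∏ χ ∈ s, (χ t) ^ (E χ : ℤ)) from rfl, map_prod]
      apply Finset.prod_congr rfl
      intro χ _
      rw [zpow_natCast]
      exact Units.val_pow_eq_pow_val _ _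
    have hU : (∏ χ ∈ s, (χ t) ^ (D' χ : ℤ))
        = (∏ χ ∈ s, (χ t) ^ (D χ : ℤ)) * (∏ χ ∈ F, g χ) ^ 2 := by
      rw [← hsplit, ← Finset.prod_mul_distrib]
      apply Finset.prod_congr rfl
      intro χ _
      simp only [hg]
      rw [← zpow_add]
      congr 1
      simp only [ha]
      omega
    have hψt : (ψ t : ℂˣ) = ∏ χ ∈ F, g χ := rfl
    rw [hdets t, hdets' t, ← hval D, ← hval D', hU, ← hψt, Units.val_mul,
      Units.val_pow_eq_pow_val]
  refine ⟨⟨ψ, hmain⟩, fun η => ⟨?_, ?_⟩⟩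
  · rintro ⟨χ, hχ⟩
    refine ⟨χ * ψ, fun t => ?_⟩
    rw [hmain t, hχ t, show ((χ * ψ) t : ℂ) = (χ t : ℂ) * (ψ t : ℂ) from rfl]
    ring
  · rintro ⟨χ', hχ'⟩
    refine ⟨χ' * ψ⁻¹, fun t => ?_⟩
    have h1 := hmain t
    rw [hχ' t] at h1
    have h2 : ((χ' * ψ⁻¹) t : ℂ) = (χ' t : ℂ) * ((ψ t : ℂˣ) : ℂ)⁻¹ := by
      rw [show ((χ' * ψ⁻¹) t : ℂˣ) = χ' t * (ψ t)⁻¹ from rfl, Units.val_mul,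
        Units.val_inv_eq_inv_val]
    rw [h2]
    have hne : ((ψ t : ℂˣ) : ℂ) ≠ 0 := Units.ne_zero _
    field_simp
    linear_combination h1.symm
end

section
/- Let V and W be finite-dimensional complex vector spaces equipped with nondegenerate symmetric bilinear forms, and let g and h be diagonalizable linear automorphisms of V and W that are isometries of the respective forms. Then dim E_{−1}(g ⊗ h) ≡ dim E_1(g)·dim E_{−1}(h) + dim E_{−1}(g)·dim E_1(h) (mod 2). -/
open TensorProduct

open Module Finset

/-- dimension of eigenspace as count of diagonal entries -/
lemma aux_finrank_eigenspace_eq_card {U : Type*} [AddCommGroup U] [Module ℂ U]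
    [FiniteDimensional ℂ U] {ι : Type*} [Fintype ι]
    (b : Basis ι ℂ U) (f : U →ₗ[ℂ] U) (d : ι → ℂ)
    (hf : ∀ i, f (b i) = d i • b i) (ν : ℂ) :
    Module.finrank ℂ (Module.End.eigenspace f ν) = Nat.card {i // d i = ν} := by
  classical
  have hrepr : ∀ (x : U) (i : ι), b.repr (f x) i = d i * b.repr x i := by
    intro x i
    conv_lhs => rw [← b.sum_repr x]
    rw [map_sum]
    simp_rw [map_smul, hf, smul_smul, map_sum, map_smul, Basis.repr_self]
    rw [Finset.sum_apply']
    simp_rw [Finsupp.smul_apply, Finsupp.single_apply, smul_eq_mul, mul_ite, mul_one, mul_zero]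
    rw [Finset.sum_ite_eq' Finset.univ i]
    simp [mul_comm]
  have key : Module.End.eigenspace f ν =
      Submodule.span ℂ (Set.range fun i : {i // d i = ν} => b i) := by
    apply le_antisymm
    · intro x hx
      rw [Module.End.mem_eigenspace_iff] at hx
      have hcoord : ∀ i, d i ≠ ν → b.repr x i = 0 := by
        intro i hi
        have h1 : d i * b.repr x i = ν * b.repr x i := by
          rw [← hrepr x i, hx, map_smul, Finsupp.smul_apply, smul_eq_mul]
        rcases mul_eq_mul_right_iff.mp h1 with hcase | hcase
        · exact absurd hcase hi
        · exact hcase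
      have hx2 : ∑ i ∈ Finset.univ.filter (fun i => d i = ν), b.repr x i • b i = x := by
        rw [Finset.sum_filter_of_ne, b.sum_repr]
        intro i _ hne
        by_contra hdi
        exact hne (by rw [hcoord i hdi, zero_smul])
      rw [← hx2]
      refine Submodule.sum_mem _ fun i hi => ?_
      refine Submodule.smul_mem _ _ (Submodule.subset_span ?_)
      exact ⟨⟨i, (Finset.mem_filter.mp hi).2⟩, rfl⟩
    · rw [Submodule.span_le]
      rintro _ ⟨⟨i, hi⟩, rfl⟩
      rw [SetLike.mem_coe, Module.End.mem_eigenspace_iff, hf, hi]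
  rw [key]
  have hli : LinearIndependent ℂ (fun i : {i // d i = ν} => b i) :=
    b.linearIndependent.comp _ Subtype.val_injective
  rw [finrank_span_eq_card hli, Nat.card_eq_fintype_card]


lemma aux_exists_eigenbasis {U : Type*} [AddCommGroup U] [Module ℂ U]
    [FiniteDimensional ℂ U] (f : Module.End ℂ U)
    (hd : (⨆ μ : ℂ, Module.End.eigenspace f μ) = ⊤) :
    ∃ (ι : Type) (_ : Fintype ι) (b : Basis ι ℂ U) (d : ι → ℂ),
      ∀ i, f (b i) = d i • b i := by
  have hint : DirectSum.IsInternal (fun μ : ℂ => Module.End.eigenspace f μ) :=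
    (DirectSum.isInternal_submodule_iff_iSupIndep_and_iSup_eq_top _).mpr
      ⟨f.eigenspaces_iSupIndep, hd⟩
  let v : ∀ μ : ℂ, Basis (Fin (finrank ℂ (Module.End.eigenspace f μ))) ℂ
      (Module.End.eigenspace f μ) := fun μ => Module.finBasis ℂ _
  let b := hint.collectedBasis v
  refine ⟨_, FiniteDimensional.fintypeBasisIndex b, b, fun x => x.1, fun i => ?_⟩
  have hmem := hint.collectedBasis_mem v i
  rwa [Module.End.mem_eigenspace_iff] at hmem

lemma aux_finrank_eigenspace_le {U : Type*} [AddCommGroup U] [Module ℂ U]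
    [FiniteDimensional ℂ U]
    (B : U →ₗ[ℂ] U →ₗ[ℂ] ℂ)
    (hnd : ∀ v : U, (∀ w : U, B v w = 0) → v = 0)
    (k : U ≃ₗ[ℂ] U)
    (hd : (⨆ μ : ℂ, Module.End.eigenspace (k : U →ₗ[ℂ] U) μ) = ⊤)
    (hiso : ∀ v w : U, B (k v) (k w) = B v w)
    (c : ℂ) (hc : c ≠ 0) :
    finrank ℂ (Module.End.eigenspace (k : U →ₗ[ℂ] U) c) ≤
      finrank ℂ (Module.End.eigenspace (k : U →ₗ[ℂ] U) c⁻¹) := by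
  classical
  set E₁ := Module.End.eigenspace (k : U →ₗ[ℂ] U) c with hE₁
  set E₂ := Module.End.eigenspace (k : U →ₗ[ℂ] U) c⁻¹ with hE₂
  let Φ : E₁ →ₗ[ℂ] Module.Dual ℂ E₂ :=
    { toFun := fun v => (B v.1).comp E₂.subtype
      map_add' := by intro v w; ext x; simp
      map_smul' := by intro a v; ext x; simp }
  have hinj : Function.Injective Φ := by
    rw [← LinearMap.ker_eq_bot, LinearMap.ker_eq_bot']
    intro v hv
    have hall : ∀ w : U, B v.1 w = 0 := by
      intro w
      have hw : w ∈ ⨆ μ : ℂ, Module.End.eigenspace (k : U →ₗ[ℂ] U) μ := by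
        rw [hd]; trivial
      refine Submodule.iSup_induction (motive := fun w => B v.1 w = 0) _ hw ?_ (map_zero _) ?_
      · intro μ w hwμ
        by_cases hμ : μ = c⁻¹
        · subst hμ
          exact LinearMap.congr_fun hv ⟨w, hwμ⟩
        · have hv1 : (k : U →ₗ[ℂ] U) v.1 = c • v.1 :=
            Module.End.mem_eigenspace_iff.mp v.2
          have hw1 : (k : U →ₗ[ℂ] U) w = μ • w :=
            Module.End.mem_eigenspace_iff.mp hwμ
          have h1 : B v.1 w = (c * μ) * B v.1 w := by
            conv_lhs => rw [← hiso v.1 w]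
            rw [show k v.1 = c • v.1 from hv1, show k w = μ • w from hw1]
            simp [smul_eq_mul, mul_comm, mul_left_comm, mul_assoc]
          have hcμ : c * μ ≠ 1 := fun hone => hμ (eq_inv_of_mul_eq_one_left
            (by rw [mul_comm]; exact hone))
          have h2 : (1 - c * μ) * B v.1 w = 0 := by linear_combination h1
          rcases mul_eq_zero.mp h2 with h3 | h3
          · exact absurd (by linear_combination -h3) hcμ
          · exact h3
      · intro x y hx hy
        rw [map_add, hx, hy, add_zero]
    exact Subtype.ext (hnd v.1 hall)
  calc finrank ℂ E₁ ≤ finrank ℂ (Module.Dual ℂ E₂) :=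
        LinearMap.finrank_le_finrank_of_injective hinj
    _ = finrank ℂ E₂ := Subspace.dual_finrank_eq


lemma aux_comb (dc ec : ℂ → ℕ) (Λ : Finset ℂ)
    (hΛ : ∀ c, c ∉ Λ → dc c = 0) (hΛ0 : ∀ c ∈ Λ, c ≠ 0)
    (hΛinv : ∀ c ∈ Λ, c⁻¹ ∈ Λ)
    (hdc : ∀ c : ℂ, c ≠ 0 → dc c = dc c⁻¹)
    (hec : ∀ c : ℂ, c ≠ 0 → ec c = ec c⁻¹) :
    ∑ c ∈ Λ, dc c * ec (-c⁻¹) ≡ dc 1 * ec (-1) + dc (-1) * ec 1 [MOD 2] := by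
  classical
  set Λ' : Finset ℂ := insert 1 (insert (-1) Λ) with hΛ'
  have hmem' : ∀ c ∈ Λ', c ≠ 0 := by
    intro c hc
    rcases Finset.mem_insert.mp hc with rfl | hc
    · norm_num
    rcases Finset.mem_insert.mp hc with rfl | hc
    · norm_num
    · exact hΛ0 c hc
  have hinv' : ∀ c ∈ Λ', c⁻¹ ∈ Λ' := by
    intro c hc
    rcases Finset.mem_insert.mp hc with rfl | hc
    · rw [inv_one]; exact Finset.mem_insert_self _ _
    rcases Finset.mem_insert.mp hc with rfl | hc
    · rw [show ((-1 : ℂ))⁻¹ = -1 by norm_num]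
      exact Finset.mem_insert_of_mem (Finset.mem_insert_self _ _)
    · exact Finset.mem_insert_of_mem (Finset.mem_insert_of_mem (hΛinv c hc))
  have hsum : ∑ c ∈ Λ, dc c * ec (-c⁻¹) = ∑ c ∈ Λ', dc c * ec (-c⁻¹) :=
    Finset.sum_subset
      ((Finset.subset_insert _ _).trans (Finset.subset_insert _ _))
      (fun x _ hx => by rw [hΛ x hx, zero_mul])
  rw [hsum, ← ZMod.natCast_eq_natCast_iff]
  push_cast
  have h1mem : (1 : ℂ) ∈ Λ' := Finset.mem_insert_self _ _
  have hm1mem : (-1 : ℂ) ∈ Λ'.erase 1 :=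
    Finset.mem_erase.mpr ⟨by norm_num,
      Finset.mem_insert_of_mem (Finset.mem_insert_self _ _)⟩
  rw [← Finset.add_sum_erase _ _ h1mem, ← Finset.add_sum_erase _ _ hm1mem]
  have hmemΛ'' : ∀ a ∈ (Λ'.erase 1).erase (-1), a ∈ Λ' ∧ a ≠ 1 ∧ a ≠ -1 ∧ a ≠ 0 := by
    intro a ha
    obtain ⟨ha1, ha2⟩ := Finset.mem_erase.mp ha
    obtain ⟨ha3, ha4⟩ := Finset.mem_erase.mp ha2
    exact ⟨ha4, ha3, ha1, hmem' a ha4⟩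
  have hrest : ∑ c ∈ (Λ'.erase 1).erase (-1),
      ((dc c : ZMod 2) * (ec (-c⁻¹) : ZMod 2)) = 0 := by
    refine Finset.sum_involution (fun a _ => a⁻¹) ?_ ?_ ?_ ?_
    · intro a ha
      obtain ⟨haΛ', ha1, ham1, ha0⟩ := hmemΛ'' a ha
      show (dc a : ZMod 2) * (ec (-a⁻¹) : ZMod 2)
          + (dc a⁻¹ : ZMod 2) * (ec (-(a⁻¹)⁻¹) : ZMod 2) = 0
      have heq : (dc a⁻¹ : ZMod 2) * (ec (-(a⁻¹)⁻¹) : ZMod 2)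
          = (dc a : ZMod 2) * (ec (-a⁻¹) : ZMod 2) := by
        rw [inv_inv, ← hdc a ha0]
        congr 2
        rw [hec (-a) (by simpa using ha0), inv_neg]
      rw [heq, ← two_mul]
      rw [show (2 : ZMod 2) = 0 by decide, zero_mul]
    · intro a ha _
      obtain ⟨haΛ', ha1, ham1, ha0⟩ := hmemΛ'' a ha
      intro heq
      change a⁻¹ = a at heq
      have : a * a = 1 := by
        nth_rewrite 1 [← heq]
        exact inv_mul_cancel₀ ha0
      rcases mul_self_eq_one_iff.mp this with h | h
      · exact ha1 h
      · exact ham1 h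
    · intro a ha
      obtain ⟨haΛ', ha1, ham1, ha0⟩ := hmemΛ'' a ha
      show a⁻¹ ∈ (Λ'.erase 1).erase (-1)
      refine Finset.mem_erase.mpr ⟨?_, Finset.mem_erase.mpr ⟨?_, hinv' a haΛ'⟩⟩
      · intro hcon
        apply ham1
        rw [← inv_inv a, hcon]
        norm_num
      · intro hcon
        exact ha1 (by rw [← inv_inv a, hcon, inv_one])
    · intro a ha
      show a⁻¹⁻¹ = a
      exact inv_inv a
  rw [hrest, add_zero]
  norm_num

/-- Let `V` and `W` be finite-dimensional complex vector spaces with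
nondegenerate symmetric bilinear forms, and `g, h` diagonalizable isometries of `V, W`
respectively.  Then `dim E_{-1}(g ⊗ h)` is congruent mod `2` to
`dim E_1(g)·dim E_{-1}(h) + dim E_{-1}(g)·dim E_1(h)`. -/
theorem dim_minus_one_eigenspace_tensor_mod_two
    (V W : Type*) [AddCommGroup V] [Module ℂ V] [FiniteDimensional ℂ V]
    [AddCommGroup W] [Module ℂ W] [FiniteDimensional ℂ W]
    (BV : V →ₗ[ℂ] V →ₗ[ℂ] ℂ) (BW : W →ₗ[ℂ] W →ₗ[ℂ] ℂ)
    (hVsymm : ∀ v w : V, BV v w = BV w v)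
    (hVnd : ∀ v : V, (∀ w : V, BV v w = 0) → v = 0)
    (hWsymm : ∀ v w : W, BW v w = BW w v)
    (hWnd : ∀ v : W, (∀ w : W, BW v w = 0) → v = 0)
    (g : V ≃ₗ[ℂ] V) (h : W ≃ₗ[ℂ] W)
    (hdg : (⨆ μ : ℂ, Module.End.eigenspace (g : V →ₗ[ℂ] V) μ) = ⊤)
    (hdh : (⨆ μ : ℂ, Module.End.eigenspace (h : W →ₗ[ℂ] W) μ) = ⊤)
    (hgiso : ∀ v w : V, BV (g v) (g w) = BV v w)
    (hhiso : ∀ v w : W, BW (h v) (h w) = BW v w) :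
    Module.finrank ℂ
        (Module.End.eigenspace (TensorProduct.map (g : V →ₗ[ℂ] V) (h : W →ₗ[ℂ] W)) (-1)) ≡
      Module.finrank ℂ (Module.End.eigenspace (g : V →ₗ[ℂ] V) 1) *
          Module.finrank ℂ (Module.End.eigenspace (h : W →ₗ[ℂ] W) (-1)) +
        Module.finrank ℂ (Module.End.eigenspace (g : V →ₗ[ℂ] V) (-1)) *
          Module.finrank ℂ (Module.End.eigenspace (h : W →ₗ[ℂ] W) 1) [MOD 2] := by
  classical
  obtain ⟨ι, _ι, bV, lam, hbV⟩ :=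
    aux_exists_eigenbasis ((g : V →ₗ[ℂ] V) : Module.End ℂ V) hdg
  obtain ⟨κ, _κ, bW, mu, hbW⟩ :=
    aux_exists_eigenbasis ((h : W →ₗ[ℂ] W) : Module.End ℂ W) hdh
  have hlam0 : ∀ i, lam i ≠ 0 := by
    intro i h0
    have h1 := hbV i
    rw [h0, zero_smul] at h1
    exact bV.ne_zero i (g.map_eq_zero_iff.mp h1)
  have hmu0 : ∀ j, mu j ≠ 0 := by
    intro j h0
    have h1 := hbW j
    rw [h0, zero_smul] at h1
    exact bW.ne_zero j (h.map_eq_zero_iff.mp h1)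
  have hrg : ∀ ν : ℂ, Module.finrank ℂ (Module.End.eigenspace (g : V →ₗ[ℂ] V) ν) =
      (Finset.univ.filter fun i => lam i = ν).card := by
    intro ν
    rw [aux_finrank_eigenspace_eq_card bV _ lam hbV ν, Nat.card_eq_fintype_card,
      Fintype.card_subtype]
  have hrh : ∀ ν : ℂ, Module.finrank ℂ (Module.End.eigenspace (h : W →ₗ[ℂ] W) ν) =
      (Finset.univ.filter fun j => mu j = ν).card := by
    intro ν
    rw [aux_finrank_eigenspace_eq_card bW _ mu hbW ν, Nat.card_eq_fintype_card,
      Fintype.card_subtype]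
  -- the tensor basis
  have hbT : ∀ p : ι × κ,
      (TensorProduct.map (g : V →ₗ[ℂ] V) (h : W →ₗ[ℂ] W)) ((bV.tensorProduct bW) p) =
        (lam p.1 * mu p.2) • (bV.tensorProduct bW) p := by
    intro p
    rw [Basis.tensorProduct_apply', TensorProduct.map_tmul, hbV, hbW,
      TensorProduct.tmul_smul, TensorProduct.smul_tmul', smul_smul, mul_comm (mu p.2),
      ← TensorProduct.smul_tmul']
  have hrT : Module.finrank ℂ
      (Module.End.eigenspace (TensorProduct.map (g : V →ₗ[ℂ] V) (h : W →ₗ[ℂ] W)) (-1)) =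
      (Finset.univ.filter fun p : ι × κ => lam p.1 * mu p.2 = -1).card := by
    rw [aux_finrank_eigenspace_eq_card (bV.tensorProduct bW) _
        (fun p : ι × κ => lam p.1 * mu p.2) hbT (-1), Nat.card_eq_fintype_card,
      Fintype.card_subtype]
  -- pairing of eigenvalue multiplicities
  have hdpair : ∀ c : ℂ, c ≠ 0 → (Finset.univ.filter fun i => lam i = c).card =
      (Finset.univ.filter fun i => lam i = c⁻¹).card := by
    intro c hc
    rw [← hrg, ← hrg]
    refine le_antisymm (aux_finrank_eigenspace_le BV hVnd g hdg hgiso c hc) ?_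
    have h2 := aux_finrank_eigenspace_le BV hVnd g hdg hgiso c⁻¹ (inv_ne_zero hc)
    rwa [inv_inv] at h2
  have hepair : ∀ c : ℂ, c ≠ 0 → (Finset.univ.filter fun j => mu j = c).card =
      (Finset.univ.filter fun j => mu j = c⁻¹).card := by
    intro c hc
    rw [← hrh, ← hrh]
    refine le_antisymm (aux_finrank_eigenspace_le BW hWnd h hdh hhiso c hc) ?_
    have h2 := aux_finrank_eigenspace_le BW hWnd h hdh hhiso c⁻¹ (inv_ne_zero hc)
    rwa [inv_inv] at h2
  -- counting the tensor eigenvectors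
  have hN : (Finset.univ.filter fun p : ι × κ => lam p.1 * mu p.2 = -1).card =
      ∑ c ∈ Finset.univ.image lam, (Finset.univ.filter fun i => lam i = c).card *
        (Finset.univ.filter fun j => mu j = -c⁻¹).card := by
    rw [Finset.card_filter, Fintype.sum_prod_type]
    have hstep : ∀ i, (∑ j, if lam i * mu j = -1 then 1 else 0)
        = (Finset.univ.filter fun j => mu j = -(lam i)⁻¹).card := by
      intro i
      rw [Finset.card_filter]
      refine Finset.sum_congr rfl fun j _ => ?_
      refine if_congr ?_ rfl rfl
      have h0 := hlam0 i
      constructor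
      · intro hh
        field_simp
        linear_combination hh
      · intro hh
        rw [hh]
        field_simp
    simp_rw [hstep]
    have hcomp := Finset.sum_comp (s := (Finset.univ : Finset ι))
      (fun c : ℂ => (Finset.univ.filter fun j => mu j = -c⁻¹).card) lam
    rw [hcomp]
    refine Finset.sum_congr rfl fun c _ => ?_
    rw [smul_eq_mul]
  rw [hrT, hrg 1, hrg (-1), hrh 1, hrh (-1), hN]
  refine aux_comb _ _ _ ?_ ?_ ?_ hdpair hepair
  · intro c hc
    rw [Finset.card_eq_zero, Finset.filter_eq_empty_iff]
    intro i _ hi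
    exact hc (hi ▸ Finset.mem_image_of_mem lam (Finset.mem_univ i))
  · intro c hc
    obtain ⟨i, _, rfl⟩ := Finset.mem_image.mp hc
    exact hlam0 i
  · intro c hc
    obtain ⟨i, _, rfl⟩ := Finset.mem_image.mp hc
    have hpos : 0 < (Finset.univ.filter fun i' => lam i' = (lam i)⁻¹).card := by
      rw [← hdpair (lam i) (hlam0 i)]
      exact Finset.card_pos.mpr ⟨i, Finset.mem_filter.mpr ⟨Finset.mem_univ i, rfl⟩⟩
    obtain ⟨i', hi'⟩ := Finset.card_pos.mp hpos
    exact Finset.mem_image.mpr ⟨i', Finset.mem_univ i', (Finset.mem_filter.mp hi').2⟩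
end

section
/- Let V and W be finite-dimensional complex vector spaces equipped with nondegenerate symmetric bilinear forms, and let g and h be diagonalizable linear automorphisms of V and W that are isometries of the respective forms. If det(g) = 1 and det(h) = 1, then dim E_{−1}(g ⊗ h) is even. -/
open TensorProduct

section Aux

open Module

variable {K V W : Type*} [Field K] [AddCommGroup V] [Module K V] [FiniteDimensional K V]
  [AddCommGroup W] [Module K W] [FiniteDimensional K W]

set_option linter.unusedSectionVars false

/-- The determinant of a diagonalizable endomorphism is the product of its eigenvalues,
with multiplicities. -/
lemma aux_det_eq_prod_eigenvalues (f : Module.End K V)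
    (hf : (⨆ μ : K, f.eigenspace μ) = ⊤) :
    LinearMap.det f =
      ∏ μ ∈ f.finite_hasEigenvalue.toFinset, μ ^ Module.finrank K (f.eigenspace μ) := by
  classical
  set S := f.finite_hasEigenvalue.toFinset with hS
  have hmemS : ∀ μ : K, μ ∈ S ↔ f.HasEigenvalue μ := fun μ => Set.Finite.mem_toFinset _
  have hindep : iSupIndep (fun μ : S => f.eigenspace (μ : K)) :=
    f.eigenspaces_iSupIndep.comp Subtype.val_injective
  have hsup : (⨆ μ : S, f.eigenspace (μ : K)) = ⊤ := by
    rw [← top_le_iff, ← hf]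
    refine iSup_le fun μ => ?_
    by_cases hμ : f.HasEigenvalue μ
    · exact le_iSup (fun μ : S => f.eigenspace (μ : K)) ⟨μ, (hmemS μ).2 hμ⟩
    · rw [Module.End.hasEigenvalue_iff, not_ne_iff] at hμ
      rw [hμ]
      exact bot_le
  have hint : DirectSum.IsInternal (fun μ : S => f.eigenspace (μ : K)) :=
    DirectSum.isInternal_submodule_of_iSupIndep_of_iSup_eq_top hindep hsup
  let bs : ∀ μ : S, Basis (Module.Free.ChooseBasisIndex K (f.eigenspace (μ : K))) K
      (f.eigenspace (μ : K)) := fun μ => Module.Free.chooseBasis K _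
  let b := hint.collectedBasis bs
  have hb : ∀ i, b i ∈ f.eigenspace (i.1 : K) := hint.collectedBasis_mem bs
  have hM : LinearMap.toMatrix b b f = Matrix.diagonal (fun i => (i.1 : K)) := by
    ext i j
    rw [LinearMap.toMatrix_apply]
    have : f (b j) = (j.1 : K) • b j := Module.End.mem_eigenspace_iff.mp (hb j)
    rw [this, map_smul, Basis.repr_self]
    rw [Matrix.diagonal]
    simp only [Finsupp.smul_single, smul_eq_mul, mul_one, Finsupp.single_apply, Matrix.of_apply]
    by_cases hij : i = j
    · subst hij; simp
    · rw [if_neg (Ne.symm hij), if_neg hij]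
  have hdet := LinearMap.det_toMatrix b f
  rw [hM, Matrix.det_diagonal] at hdet
  rw [← hdet]
  rw [← Finset.prod_coe_sort S (fun μ => μ ^ Module.finrank K (f.eigenspace μ))]
  rw [show (Finset.univ : Finset ((i : { x // x ∈ S }) ×
      Module.Free.ChooseBasisIndex K (f.eigenspace (i : K)))) =
      Finset.univ.sigma (fun _ => Finset.univ) from rfl, Finset.prod_sigma]
  refine Finset.prod_congr rfl fun μ _ => ?_
  simp only []
  rw [Finset.prod_const, Finset.card_univ,
    ← Module.finrank_eq_card_chooseBasisIndex K (f.eigenspace (μ : K))]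

lemma aux_finrank_ker_dualMap (T : V →ₗ[K] V) :
    finrank K (LinearMap.ker T.dualMap) = finrank K (LinearMap.ker T) := by
  have h1 := LinearMap.finrank_range_add_finrank_ker T
  have h2 := LinearMap.finrank_range_add_finrank_ker T.dualMap
  have h3 : finrank K (LinearMap.range T.dualMap) = finrank K (LinearMap.range T) :=
    LinearMap.finrank_range_dualMap_eq_finrank_range T
  have h4 : finrank K (Module.Dual K V) = finrank K V := Subspace.dual_finrank_eq
  omega

lemma aux_dualMap_sub_smul (T : V →ₗ[K] V) (μ : K) :
    (T - μ • LinearMap.id).dualMap = T.dualMap - μ • LinearMap.id := by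
  ext φ v
  simp [LinearMap.dualMap_apply]

lemma aux_eigenspace_eq_ker (f : Module.End K V) (μ : K) :
    f.eigenspace μ = LinearMap.ker (f - μ • LinearMap.id) := by
  rw [Module.End.eigenspace_def]
  rfl

/-- If `g` is conjugate, via some linear equivalence `Φ : V ≃ V*`, to the dual of its inverse,
then the eigenspaces of `g` for `μ` and `μ⁻¹` have the same dimension. -/
lemma aux_finrank_eigenspace_inv (g : V ≃ₗ[K] V) (Φ : V ≃ₗ[K] Module.Dual K V)
    (hconj : ∀ v : V, Φ (g v) = (g.symm : V →ₗ[K] V).dualMap (Φ v)) (μ : K) (hμ : μ ≠ 0) :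
    finrank K (Module.End.eigenspace (g : V →ₗ[K] V) μ)
      = finrank K (Module.End.eigenspace (g : V →ₗ[K] V) μ⁻¹) := by
  set A : V →ₗ[K] V := (g : V →ₗ[K] V) - μ • LinearMap.id with hA
  set T : Module.Dual K V →ₗ[K] Module.Dual K V :=
    ((g.symm : V →ₗ[K] V) - μ • LinearMap.id).dualMap with hT
  have hcomm : Φ.toLinearMap.comp A = T.comp Φ.toLinearMap := by
    ext v
    simp only [hA, hT, aux_dualMap_sub_smul, LinearMap.coe_comp, LinearEquiv.coe_coe,
      Function.comp_apply, LinearMap.sub_apply, LinearMap.smul_apply, LinearMap.id_apply,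
      map_sub, map_smul]
    rw [hconj]
  have hker : finrank K (LinearMap.ker A) = finrank K (LinearMap.ker T) := by
    have h1 : LinearMap.ker (Φ.toLinearMap.comp A) = LinearMap.ker A :=
      LinearMap.ker_comp_of_ker_eq_bot A Φ.ker
    have h2 : LinearMap.ker (T.comp Φ.toLinearMap) = Submodule.comap Φ.toLinearMap
        (LinearMap.ker T) := LinearMap.ker_comp _ _
    rw [← h1, hcomm, h2, Submodule.comap_equiv_eq_map_symm]
    exact LinearEquiv.finrank_map_eq _ _
  have hker2 : finrank K (LinearMap.ker T)
      = finrank K (LinearMap.ker ((g.symm : V →ₗ[K] V) - μ • LinearMap.id)) :=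
    aux_finrank_ker_dualMap _
  have hker3 : LinearMap.ker ((g.symm : V →ₗ[K] V) - μ • LinearMap.id)
      = Module.End.eigenspace (g : V →ₗ[K] V) μ⁻¹ := by
    ext v
    rw [LinearMap.mem_ker, Module.End.mem_eigenspace_iff]
    simp only [LinearMap.sub_apply, LinearMap.smul_apply, LinearMap.id_apply, sub_eq_zero]
    constructor
    · intro hgv
      have h1 : v = μ • g v := by rw [← map_smul, ← hgv]; simp
      exact ((inv_smul_eq_iff₀ hμ).mpr h1).symm
    · intro hgv
      have h1 : v = μ⁻¹ • g.symm v := by rw [← map_smul, ← hgv]; simp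
      exact (inv_smul_eq_iff₀ hμ).mp h1.symm
  rw [aux_eigenspace_eq_ker, hker, hker2, hker3]

/-- Parity lemma: an injective diagonalizable endomorphism with determinant `1` whose eigenvalue
multiplicities are invariant under `μ ↦ μ⁻¹` has even-dimensional `-1` eigenspace. -/
lemma aux_even_finrank_eigenspace_neg_one (f : Module.End K V)
    (h1 : (-1 : K) ≠ 1)
    (hdiag : (⨆ μ : K, f.eigenspace μ) = ⊤)
    (hdet : LinearMap.det f = 1)
    (hinj : LinearMap.ker f = ⊥)
    (hsym : ∀ μ : K, μ ≠ 0 → finrank K (f.eigenspace μ) = finrank K (f.eigenspace μ⁻¹)) :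
    Even (finrank K (f.eigenspace (-1))) := by
  classical
  set S := f.finite_hasEigenvalue.toFinset with hS
  have hmemS : ∀ μ : K, μ ∈ S ↔ f.HasEigenvalue μ := fun μ => Set.Finite.mem_toFinset _
  have h0 : (0 : K) ∉ S := by
    rw [hmemS, Module.End.hasEigenvalue_iff, Module.End.eigenspace_zero, hinj, not_ne_iff]
  have hprod := aux_det_eq_prod_eigenvalues f hdiag
  rw [hdet, ← hS] at hprod
  by_cases hneg : (-1 : K) ∈ S
  swap
  · rw [hmemS, Module.End.hasEigenvalue_iff, not_ne_iff] at hneg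
    rw [hneg]
    simp
  · rw [show S = insert (-1 : K) (S.erase (-1)) from (Finset.insert_erase hneg).symm] at hprod
    rw [Finset.prod_insert (Finset.notMem_erase _ _)] at hprod
    have hne0 : ∀ a ∈ S.erase (-1 : K), a ≠ 0 := by
      intro a ha
      rintro rfl
      exact h0 (Finset.mem_of_mem_erase ha)
    have hrest : ∏ μ ∈ S.erase (-1 : K), μ ^ finrank K (f.eigenspace μ) = 1 := by
      refine Finset.prod_involution (fun μ _ => μ⁻¹) ?_ ?_ ?_ ?_
      · intro a ha
        rw [← hsym a (hne0 a ha), ← mul_pow, mul_inv_cancel₀ (hne0 a ha), one_pow]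
      · intro a ha hfa heq
        have ha2 : a * a = 1 := by
          rw [← mul_inv_cancel₀ (hne0 a ha), heq]
        rcases mul_self_eq_one_iff.mp ha2 with h | h
        · exact hfa (by rw [h, one_pow])
        · exact (Finset.mem_erase.mp ha).1 h
      · intro a ha
        show a⁻¹ ∈ S.erase (-1)
        rw [Finset.mem_erase] at ha ⊢
        have ha' := ha
        refine ⟨?_, ?_⟩
        · intro hinv
          exact ha.1 (by rw [← inv_inv a, hinv, inv_neg, inv_one])
        · rw [hmemS, Module.End.hasEigenvalue_iff] at ha ⊢
          intro hbot
          apply ha.2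
          rw [← Submodule.finrank_eq_zero] at hbot ⊢
          rw [hsym a (hne0 a (Finset.mem_erase.mpr ha'))]
          exact hbot
      · intro a ha
        exact inv_inv a
    rw [hrest, mul_one] at hprod
    exact (neg_one_pow_eq_one_iff_even h1).mp hprod.symm

/-- The tensor product of two diagonalizable endomorphisms is diagonalizable. -/
lemma aux_iSup_eigenspace_tensor (f : Module.End K V) (k : Module.End K W)
    (hf : (⨆ μ : K, f.eigenspace μ) = ⊤) (hk : (⨆ μ : K, k.eigenspace μ) = ⊤) :
    (⨆ μ : K, Module.End.eigenspace (TensorProduct.map f k) μ) = ⊤ := by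
  rw [eq_top_iff]
  rintro x -
  set T := ⨆ μ : K, Module.End.eigenspace (TensorProduct.map f k) μ with hT
  induction x using TensorProduct.induction_on with
  | zero => exact zero_mem T
  | add x y hx hy => exact add_mem hx hy
  | tmul v w =>
    have hv : v ∈ ⨆ μ : K, f.eigenspace μ := hf ▸ Submodule.mem_top
    refine Submodule.iSup_induction (motive := fun v => v ⊗ₜ[K] w ∈ T) _ hv ?_ ?_ ?_
    · intro lam v hvl
      have hw : w ∈ ⨆ μ : K, k.eigenspace μ := hk ▸ Submodule.mem_top
      refine Submodule.iSup_induction (motive := fun w => v ⊗ₜ[K] w ∈ T) _ hw ?_ ?_ ?_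
      · intro mu w hwm
        have hmem : v ⊗ₜ[K] w ∈ Module.End.eigenspace (TensorProduct.map f k) (lam * mu) := by
          rw [Module.End.mem_eigenspace_iff, TensorProduct.map_tmul,
            Module.End.mem_eigenspace_iff.mp hvl, Module.End.mem_eigenspace_iff.mp hwm,
            TensorProduct.smul_tmul_smul]
        exact le_iSup (fun μ : K => Module.End.eigenspace (TensorProduct.map f k) μ)
          (lam * mu) hmem
      · simpa using zero_mem T
      · intro w1 w2 h1 h2; simpa [tmul_add] using add_mem h1 h2
    · simpa using zero_mem T
    · intro v1 v2 h1 h2; simpa [add_tmul] using add_mem h1 h2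

lemma aux_det_tensor_map (f : V →ₗ[K] V) (k : W →ₗ[K] W) :
    LinearMap.det (TensorProduct.map f k)
      = LinearMap.det f ^ finrank K W * LinearMap.det k ^ finrank K V := by
  classical
  let bV := Module.finBasis K V
  let bW := Module.finBasis K W
  rw [← LinearMap.det_toMatrix (bV.tensorProduct bW), TensorProduct.toMatrix_map,
    Matrix.det_kronecker, LinearMap.det_toMatrix, LinearMap.det_toMatrix,
    Fintype.card_fin, Fintype.card_fin]

end Aux

/-- Let `V` and `W` be finite-dimensional complex vector spaces with
nondegenerate symmetric bilinear forms, and `g, h` diagonalizable isometries of `V, W`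
respectively.  If `det g = 1` and `det h = 1`, then `dim E_{-1}(g ⊗ h)` is even. -/
theorem dim_minus_one_eigenspace_tensor_even_of_special
    (V W : Type*) [AddCommGroup V] [Module ℂ V] [FiniteDimensional ℂ V]
    [AddCommGroup W] [Module ℂ W] [FiniteDimensional ℂ W]
    (BV : V →ₗ[ℂ] V →ₗ[ℂ] ℂ) (BW : W →ₗ[ℂ] W →ₗ[ℂ] ℂ)
    (hVsymm : ∀ v w : V, BV v w = BV w v)
    (hVnd : ∀ v : V, (∀ w : V, BV v w = 0) → v = 0)
    (hWsymm : ∀ v w : W, BW v w = BW w v)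
    (hWnd : ∀ v : W, (∀ w : W, BW v w = 0) → v = 0)
    (g : V ≃ₗ[ℂ] V) (h : W ≃ₗ[ℂ] W)
    (hdg : (⨆ μ : ℂ, Module.End.eigenspace (g : V →ₗ[ℂ] V) μ) = ⊤)
    (hdh : (⨆ μ : ℂ, Module.End.eigenspace (h : W →ₗ[ℂ] W) μ) = ⊤)
    (hgiso : ∀ v w : V, BV (g v) (g w) = BV v w)
    (hhiso : ∀ v w : W, BW (h v) (h w) = BW v w)
    (hgdet : LinearMap.det (g : V →ₗ[ℂ] V) = 1)
    (hhdet : LinearMap.det (h : W →ₗ[ℂ] W) = 1) :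
    Even (Module.finrank ℂ
      (Module.End.eigenspace (TensorProduct.map (g : V →ₗ[ℂ] V) (h : W →ₗ[ℂ] W)) (-1))) := by
  classical
  -- the equivalences with the duals coming from the nondegenerate forms
  have hndV : LinearMap.BilinForm.Nondegenerate BV :=
    ⟨hVnd, fun w hw => hVnd w (fun v => by rw [hVsymm]; exact hw v)⟩
  have hndW : LinearMap.BilinForm.Nondegenerate BW :=
    ⟨hWnd, fun w hw => hWnd w (fun v => by rw [hWsymm]; exact hw v)⟩
  let Φ1 : V ≃ₗ[ℂ] Module.Dual ℂ V := LinearMap.BilinForm.toDual BV hndV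
  let Φ2 : W ≃ₗ[ℂ] Module.Dual ℂ W := LinearMap.BilinForm.toDual BW hndW
  have hconj1 : ∀ v : V, Φ1 (g v) = (g.symm : V →ₗ[ℂ] V).dualMap (Φ1 v) := by
    intro v
    ext w
    have h2 := hgiso v (g.symm w)
    rw [show g (g.symm w) = w from g.apply_symm_apply w] at h2
    exact h2
  have hconj2 : ∀ v : W, Φ2 (h v) = (h.symm : W →ₗ[ℂ] W).dualMap (Φ2 v) := by
    intro v
    ext w
    have h2 := hhiso v (h.symm w)
    rw [show h (h.symm w) = w from h.apply_symm_apply w] at h2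
    exact h2
  -- the tensor product equivalence and its dual conjugation property
  let G : (V ⊗[ℂ] W) ≃ₗ[ℂ] (V ⊗[ℂ] W) := TensorProduct.congr g h
  let ΦT : (V ⊗[ℂ] W) ≃ₗ[ℂ] Module.Dual ℂ (V ⊗[ℂ] W) :=
    (TensorProduct.congr Φ1 Φ2).trans (TensorProduct.dualDistribEquiv ℂ V W)
  have hGcoe : (G : V ⊗[ℂ] W →ₗ[ℂ] V ⊗[ℂ] W)
      = TensorProduct.map (g : V →ₗ[ℂ] V) (h : W →ₗ[ℂ] W) := by
    apply TensorProduct.ext'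
    intro v w
    simp [G, TensorProduct.congr_tmul]
  have hconjT : ∀ x : V ⊗[ℂ] W, ΦT (G x) = (G.symm : V ⊗[ℂ] W →ₗ[ℂ] V ⊗[ℂ] W).dualMap (ΦT x) := by
    have key : (ΦT.toLinearMap).comp (G : V ⊗[ℂ] W →ₗ[ℂ] V ⊗[ℂ] W)
        = ((G.symm : V ⊗[ℂ] W →ₗ[ℂ] V ⊗[ℂ] W).dualMap).comp ΦT.toLinearMap := by
      apply TensorProduct.ext'
      intro v w
      apply TensorProduct.ext'
      intro v' w'
      simp only [LinearMap.coe_comp, LinearEquiv.coe_coe, Function.comp_apply,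
        TensorProduct.congr_tmul, LinearEquiv.trans_apply, LinearMap.dualMap_apply, ΦT, G,
        TensorProduct.dualDistribEquiv, TensorProduct.dualDistribEquivOfBasis_apply_apply,
        TensorProduct.congr_symm_tmul, TensorProduct.map_tmul, hconj1, hconj2,
        TensorProduct.dualDistrib_apply, TensorProduct.homTensorHomMap_apply,
        TensorProduct.lid_tmul, smul_eq_mul]
    intro x
    have := LinearMap.congr_fun key x
    simpa using this
  -- assemble
  have hdiagT := aux_iSup_eigenspace_tensor (g : V →ₗ[ℂ] V) (h : W →ₗ[ℂ] W) hdg hdh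
  have hdetT : LinearMap.det (TensorProduct.map (g : V →ₗ[ℂ] V) (h : W →ₗ[ℂ] W)) = 1 := by
    rw [aux_det_tensor_map, hgdet, hhdet, one_pow, one_pow, one_mul]
  have hinjT : LinearMap.ker (TensorProduct.map (g : V →ₗ[ℂ] V) (h : W →ₗ[ℂ] W)) = ⊥ := by
    rw [← hGcoe]
    exact G.ker
  have hsymT : ∀ μ : ℂ, μ ≠ 0 →
      Module.finrank ℂ (Module.End.eigenspace
        (TensorProduct.map (g : V →ₗ[ℂ] V) (h : W →ₗ[ℂ] W)) μ)
      = Module.finrank ℂ (Module.End.eigenspace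
        (TensorProduct.map (g : V →ₗ[ℂ] V) (h : W →ₗ[ℂ] W)) μ⁻¹) := by
    intro μ hμ
    have := aux_finrank_eigenspace_inv G ΦT hconjT μ hμ
    rwa [hGcoe] at this
  have h1 : (-1 : ℂ) ≠ 1 := by norm_num
  exact aux_even_finrank_eigenspace_neg_one _ h1 hdiagT hdetT hinjT hsymT
end

section
/- Let V and W be finite-dimensional complex vector spaces equipped with nondegenerate symmetric bilinear forms, and let g and h be diagonalizable linear automorphisms of V and W that are isometries of the respective forms. If det(g) = −1 and det(h) = 1, then dim E_{−1}(g ⊗ h) ≡ dim W (mod 2); in particular it is odd when dim W is odd and even when dim W is even. -/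
open TensorProduct Module

section Aux

variable {K : Type*} [Field K] {U : Type*} [AddCommGroup U] [Module K U] [FiniteDimensional K U]

/-- The determinant of a diagonalizable endomorphism is the product of its eigenvalues,
with multiplicities given by the dimensions of the eigenspaces. -/
lemma aux_det_eq_prod (f : Module.End K U) (hf : (⨆ μ : K, f.eigenspace μ) = ⊤) :
    LinearMap.det (f : U →ₗ[K] U) =
      ∏ μ : f.Eigenvalues, (μ : K) ^ finrank K (f.eigenspace (μ : K)) := by
  classical
  have hind : iSupIndep (fun μ : f.Eigenvalues => f.eigenspace (μ : K)) :=
    f.eigenspaces_iSupIndep.comp Subtype.val_injective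
  have hsup : (⨆ μ : f.Eigenvalues, f.eigenspace (μ : K)) = ⊤ := by
    rw [← hf]
    refine le_antisymm (iSup_le fun μ => le_iSup _ (μ : K)) (iSup_le fun μ => ?_)
    by_cases hμ : f.eigenspace μ = ⊥
    · simp [hμ]
    · exact le_iSup (fun ν : f.Eigenvalues => f.eigenspace (ν : K))
        ⟨μ, Module.End.hasEigenvalue_iff.mpr hμ⟩
  have hI : DirectSum.IsInternal (fun μ : f.Eigenvalues => f.eigenspace (μ : K)) :=
    DirectSum.isInternal_submodule_of_iSupIndep_of_iSup_eq_top hind hsup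
  let b : ∀ μ : f.Eigenvalues,
      Basis (Fin (finrank K (f.eigenspace (μ : K)))) K (f.eigenspace (μ : K)) :=
    fun μ => finBasis K _
  let B := hI.collectedBasis b
  rw [← LinearMap.det_toMatrix B]
  have hdiag : LinearMap.toMatrix B B f =
      Matrix.diagonal (fun j : Σ μ : f.Eigenvalues,
        Fin (finrank K (f.eigenspace (μ : K))) => (j.1 : K)) := by
    ext j k
    rw [LinearMap.toMatrix_apply]
    have hk : B k ∈ f.eigenspace (k.1 : K) := hI.collectedBasis_mem b k
    have hfk : f (B k) = (k.1 : K) • B k := Module.End.mem_eigenspace_iff.mp hk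
    rw [hfk, map_smul, Basis.repr_self, Finsupp.smul_apply, Finsupp.single_apply]
    rcases eq_or_ne j k with rfl | hne
    · simp
    · simp [Matrix.diagonal_apply_ne _ hne, Ne.symm hne]
  rw [hdiag, Matrix.det_diagonal, ← Finset.univ_sigma_univ, Finset.prod_sigma]
  simp

/-- Eigenspaces for `λ` and `λ⁻¹` of a diagonalizable isometry of a nondegenerate bilinear
form have comparable dimensions. -/
lemma aux_finrank_eigenspace_le_s11 (f : Module.End K U) (B : U →ₗ[K] U →ₗ[K] K)
    (hnd : ∀ v : U, (∀ w : U, B v w = 0) → v = 0)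
    (hiso : ∀ v w : U, B (f v) (f w) = B v w)
    (hf : (⨆ μ : K, f.eigenspace μ) = ⊤) {lam : K} (hlam : lam ≠ 0) :
    finrank K (f.eigenspace lam) ≤ finrank K (f.eigenspace lam⁻¹) := by
  classical
  have horth : ∀ (μ ν : K), μ * ν ≠ 1 → ∀ v ∈ f.eigenspace μ, ∀ w ∈ f.eigenspace ν,
      B v w = 0 := by
    intro μ ν hμν v hv w hw
    have h1 : B v w = (μ * ν) * B v w := by
      conv_lhs => rw [← hiso v w]
      rw [Module.End.mem_eigenspace_iff.mp hv, Module.End.mem_eigenspace_iff.mp hw]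
      simp only [map_smul, LinearMap.smul_apply, smul_eq_mul]
      ring
    by_contra hB
    exact hμν (mul_right_cancel₀ hB (by rw [one_mul, ← h1])).symm
  let φ : f.eigenspace lam →ₗ[K] Module.Dual K (f.eigenspace lam⁻¹) :=
    { toFun := fun v => (B v.1).comp (f.eigenspace lam⁻¹).subtype
      map_add' := fun x y => by ext w; simp
      map_smul' := fun c x => by ext w; simp }
  have hφ : Function.Injective φ := by
    rw [injective_iff_map_eq_zero]
    intro v hv0
    have hvw : ∀ w : U, B v.1 w = 0 := by
      intro w
      have hw : w ∈ ⨆ μ : K, f.eigenspace μ := hf ▸ Submodule.mem_top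
      refine Submodule.iSup_induction (motive := fun w => B v.1 w = 0) _ hw
        (fun ν w hwν => ?_) (by simp) (fun a b ha hb => by simp [ha, hb])
      rcases eq_or_ne ν lam⁻¹ with rfl | hν
      · have := congrArg (fun ψ => ψ ⟨w, hwν⟩) hv0
        simpa [φ] using this
      · refine horth lam ν (fun hcon => hν ?_) v.1 v.2 w hwν
        exact eq_inv_of_mul_eq_one_left (by rw [mul_comm]; exact hcon)
    exact Subtype.ext (hnd v.1 hvw)
  calc finrank K (f.eigenspace lam)
      ≤ finrank K (Module.Dual K (f.eigenspace lam⁻¹)) :=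
        LinearMap.finrank_le_finrank_of_injective hφ
    _ = finrank K (f.eigenspace lam⁻¹) := Subspace.dual_finrank_eq

lemma aux_finrank_eigenspace_eq (f : Module.End K U) (B : U →ₗ[K] U →ₗ[K] K)
    (hnd : ∀ v : U, (∀ w : U, B v w = 0) → v = 0)
    (hiso : ∀ v w : U, B (f v) (f w) = B v w)
    (hf : (⨆ μ : K, f.eigenspace μ) = ⊤) {lam : K} (hlam : lam ≠ 0) :
    finrank K (f.eigenspace lam) = finrank K (f.eigenspace lam⁻¹) := by
  refine le_antisymm (aux_finrank_eigenspace_le_s11 f B hnd hiso hf hlam) ?_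
  have := aux_finrank_eigenspace_le_s11 f B hnd hiso hf (inv_ne_zero hlam)
  rwa [inv_inv] at this

/-- The determinant of an injective diagonalizable isometry of a nondegenerate bilinear form
is `(-1)` raised to the dimension of the `-1`-eigenspace. -/
lemma aux_det_eq_neg_one_pow (f : Module.End K U) (B : U →ₗ[K] U →ₗ[K] K)
    (hnd : ∀ v : U, (∀ w : U, B v w = 0) → v = 0)
    (hiso : ∀ v w : U, B (f v) (f w) = B v w)
    (hf : (⨆ μ : K, f.eigenspace μ) = ⊤) (hinj : Function.Injective f) :
    LinearMap.det (f : U →ₗ[K] U) = (-1 : K) ^ finrank K (f.eigenspace (-1)) := by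
  classical
  set F : K → K := fun μ => μ ^ finrank K (f.eigenspace μ) with hFdef
  set t : Finset K := Finset.univ.image (fun μ : f.Eigenvalues => (μ : K)) with ht
  have hmem : ∀ μ : K, μ ∈ t ↔ f.eigenspace μ ≠ ⊥ := by
    intro μ
    constructor
    · intro hμ
      obtain ⟨ν, -, rfl⟩ := Finset.mem_image.mp hμ
      exact Module.End.hasEigenvalue_iff.mp ν.2
    · intro hμ
      exact Finset.mem_image.mpr ⟨⟨μ, Module.End.hasEigenvalue_iff.mpr hμ⟩,
        Finset.mem_univ _, rfl⟩
  have hne0 : ∀ μ : K, μ ∈ t → μ ≠ 0 := by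
    rintro μ hμ rfl
    exact (hmem 0).mp hμ (by rw [Module.End.eigenspace_zero, LinearMap.ker_eq_bot.mpr hinj])
  have step1 : LinearMap.det (f : U →ₗ[K] U) = ∏ μ ∈ t, F μ := by
    rw [aux_det_eq_prod f hf, ht]
    exact (Finset.prod_image (s := (Finset.univ : Finset f.Eigenvalues))
      (g := fun μ : f.Eigenvalues => (μ : K)) (f := F)
      (fun a _ b _ hab => Subtype.val_injective hab)).symm
  have hm : ∀ μ : K, μ ∈ t → μ ≠ 0 → finrank K (f.eigenspace μ) =
      finrank K (f.eigenspace μ⁻¹) := fun μ _ hμ =>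
    aux_finrank_eigenspace_eq f B hnd hiso hf hμ
  have step2 : ∏ μ ∈ t, F μ = F (-1) * ∏ μ ∈ t.erase (-1), F μ := by
    by_cases hm1 : (-1 : K) ∈ t
    · exact (Finset.mul_prod_erase t F hm1).symm
    · rw [Finset.erase_eq_of_notMem hm1]
      have hbot : f.eigenspace (-1) = ⊥ := by
        by_contra hc; exact hm1 ((hmem (-1)).mpr hc)
      have : F (-1) = 1 := by
        show (-1 : K) ^ finrank K (f.eigenspace (-1)) = 1
        rw [hbot, finrank_bot, pow_zero]
      rw [this, one_mul]
  have step3 : ∏ μ ∈ t.erase (-1), F μ = 1 := by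
    refine Finset.prod_involution (fun a _ => a⁻¹) ?_ ?_ ?_ ?_
    · intro a ha
      have ha0 : a ≠ 0 := hne0 a (Finset.mem_of_mem_erase ha)
      show a ^ finrank K (f.eigenspace a) * a⁻¹ ^ finrank K (f.eigenspace a⁻¹) = 1
      rw [← hm a (Finset.mem_of_mem_erase ha) ha0, ← mul_pow, mul_inv_cancel₀ ha0, one_pow]
    · intro a ha hFa hcon
      have ha0 : a ≠ 0 := hne0 a (Finset.mem_of_mem_erase ha)
      have ham1 : a ≠ -1 := Finset.ne_of_mem_erase ha
      have haa : a * a = 1 := by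
        nth_rewrite 1 [← hcon]
        exact inv_mul_cancel₀ ha0
      rcases mul_self_eq_one_iff.mp haa with rfl | rfl
      · refine absurd ?_ hFa
        show (1 : K) ^ finrank K (f.eigenspace 1) = 1
        rw [one_pow]
      · exact ham1 rfl
    · intro a ha
      have ha0 : a ≠ 0 := hne0 a (Finset.mem_of_mem_erase ha)
      have ham1 : a ≠ -1 := Finset.ne_of_mem_erase ha
      have hEa : f.eigenspace a ≠ ⊥ := (hmem a).mp (Finset.mem_of_mem_erase ha)
      refine Finset.mem_erase.mpr ⟨?_, ?_⟩
      · intro hcon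
        exact ham1 (by rw [← inv_inv a, hcon]; norm_num)
      · refine (hmem a⁻¹).mpr fun hc => hEa ?_
        have h0 : finrank K (f.eigenspace a) = 0 := by
          rw [hm a (Finset.mem_of_mem_erase ha) ha0, hc, finrank_bot]
        exact Submodule.finrank_eq_zero.mp h0
    · intro a _
      exact inv_inv a
  rw [step1, step2, step3, mul_one, hFdef]

end Aux

section TensorDiag

variable {V W : Type*} [AddCommGroup V] [Module ℂ V] [AddCommGroup W] [Module ℂ W]

/-- The tensor product of diagonalizable endomorphisms is diagonalizable. -/
lemma aux_tensor_diag (g : V →ₗ[ℂ] V) (h : W →ₗ[ℂ] W)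
    (hg : (⨆ μ : ℂ, Module.End.eigenspace g μ) = ⊤)
    (hh : (⨆ μ : ℂ, Module.End.eigenspace h μ) = ⊤) :
    (⨆ c : ℂ, Module.End.eigenspace (TensorProduct.map g h) c) = ⊤ := by
  rw [eq_top_iff, ← TensorProduct.span_tmul_eq_top ℂ V W, Submodule.span_le]
  rintro x ⟨v, w, rfl⟩
  have hv : v ∈ ⨆ μ : ℂ, Module.End.eigenspace g μ := hg ▸ Submodule.mem_top
  refine Submodule.iSup_induction
    (motive := fun v => v ⊗ₜ[ℂ] w ∈ ⨆ c : ℂ, Module.End.eigenspace (TensorProduct.map g h) c)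
    _ hv (fun μ v hvμ => ?_) (by simp) (fun a b ha hb => by
      simpa [TensorProduct.add_tmul] using Submodule.add_mem _ ha hb)
  have hw : w ∈ ⨆ ν : ℂ, Module.End.eigenspace h ν := hh ▸ Submodule.mem_top
  refine Submodule.iSup_induction
    (motive := fun w => v ⊗ₜ[ℂ] w ∈ ⨆ c : ℂ, Module.End.eigenspace (TensorProduct.map g h) c)
    _ hw (fun ν w hwν => ?_) (by simp) (fun a b ha hb => by
      simpa [TensorProduct.tmul_add] using Submodule.add_mem _ ha hb)
  refine Submodule.mem_iSup_of_mem (μ * ν) ?_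
  rw [Module.End.mem_eigenspace_iff]
  rw [TensorProduct.map_tmul, Module.End.mem_eigenspace_iff.mp hvμ,
    Module.End.mem_eigenspace_iff.mp hwν, TensorProduct.smul_tmul_smul]

end TensorDiag

lemma neg_one_pow_modeq_of_eq {m n : ℕ} (h : (-1 : ℂ) ^ m = (-1 : ℂ) ^ n) : m ≡ n [MOD 2] := by
  rcases Nat.even_or_odd m with hm | hm <;> rcases Nat.even_or_odd n with hn | hn
  · exact (Nat.even_iff.mp hm).trans (Nat.even_iff.mp hn).symm
  · rw [hm.neg_one_pow, hn.neg_one_pow] at h; norm_num at h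
  · rw [hm.neg_one_pow, hn.neg_one_pow] at h; norm_num at h
  · exact (Nat.odd_iff.mp hm).trans (Nat.odd_iff.mp hn).symm

set_option maxHeartbeats 1000000 in
set_option synthInstance.maxHeartbeats 200000 in
/-- Let `V` and `W` be finite-dimensional complex vector spaces with
nondegenerate symmetric bilinear forms, and `g, h` diagonalizable isometries of `V, W`
respectively.  If `det g = -1` and `det h = 1`, then
`dim E_{-1}(g ⊗ h) ≡ dim W (mod 2)`. -/
theorem dim_minus_one_eigenspace_tensor_of_nonspecial
    (V W : Type*) [AddCommGroup V] [Module ℂ V] [FiniteDimensional ℂ V]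
    [AddCommGroup W] [Module ℂ W] [FiniteDimensional ℂ W]
    (BV : V →ₗ[ℂ] V →ₗ[ℂ] ℂ) (BW : W →ₗ[ℂ] W →ₗ[ℂ] ℂ)
    (hVsymm : ∀ v w : V, BV v w = BV w v)
    (hVnd : ∀ v : V, (∀ w : V, BV v w = 0) → v = 0)
    (hWsymm : ∀ v w : W, BW v w = BW w v)
    (hWnd : ∀ v : W, (∀ w : W, BW v w = 0) → v = 0)
    (g : V ≃ₗ[ℂ] V) (h : W ≃ₗ[ℂ] W)
    (hdg : (⨆ μ : ℂ, Module.End.eigenspace (g : V →ₗ[ℂ] V) μ) = ⊤)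
    (hdh : (⨆ μ : ℂ, Module.End.eigenspace (h : W →ₗ[ℂ] W) μ) = ⊤)
    (hgiso : ∀ v w : V, BV (g v) (g w) = BV v w)
    (hhiso : ∀ v w : W, BW (h v) (h w) = BW v w)
    (hgdet : LinearMap.det (g : V →ₗ[ℂ] V) = -1)
    (hhdet : LinearMap.det (h : W →ₗ[ℂ] W) = 1) :
    Module.finrank ℂ
        (Module.End.eigenspace (TensorProduct.map (g : V →ₗ[ℂ] V) (h : W →ₗ[ℂ] W)) (-1)) ≡
      Module.finrank ℂ W [MOD 2] := by
  classical
  set F : V ⊗[ℂ] W →ₗ[ℂ] V ⊗[ℂ] W :=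
    TensorProduct.map (g : V →ₗ[ℂ] V) (h : W →ₗ[ℂ] W) with hF
  -- the tensor product bilinear form
  let BT : V ⊗[ℂ] W →ₗ[ℂ] Module.Dual ℂ (V ⊗[ℂ] W) :=
    (TensorProduct.dualDistrib ℂ V W) ∘ₗ TensorProduct.map BV BW
  have hBT : ∀ (v : V) (w : W) (v' : V) (w' : W),
      BT (v ⊗ₜ w) (v' ⊗ₜ w') = BV v v' * BW w w' := by
    intro v w v' w'
    simp [BT, TensorProduct.map_tmul]
  -- injectivity of the associated maps
  have hBVinj : Function.Injective BV := by
    rw [injective_iff_map_eq_zero]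
    intro v hv
    exact hVnd v fun w => by rw [hv]; rfl
  have hBWinj : Function.Injective BW := by
    rw [injective_iff_map_eq_zero]
    intro v hv
    exact hWnd v fun w => by rw [hv]; rfl
  have hBVbij : Function.Bijective BV :=
    ⟨hBVinj, (LinearMap.injective_iff_surjective_of_finrank_eq_finrank
      Subspace.dual_finrank_eq.symm).mp hBVinj⟩
  have hBWbij : Function.Bijective BW :=
    ⟨hBWinj, (LinearMap.injective_iff_surjective_of_finrank_eq_finrank
      Subspace.dual_finrank_eq.symm).mp hBWinj⟩
  let eV : V ≃ₗ[ℂ] Module.Dual ℂ V := LinearEquiv.ofBijective BV hBVbij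
  let eW : W ≃ₗ[ℂ] Module.Dual ℂ W := LinearEquiv.ofBijective BW hBWbij
  have hmapinj : Function.Injective (TensorProduct.map BV BW) := by
    have heq : TensorProduct.map BV BW = (TensorProduct.congr eV eW).toLinearMap :=
      TensorProduct.ext' fun v w => by simp [TensorProduct.congr_tmul, eV, eW]
    rw [heq]
    exact (TensorProduct.congr eV eW).injective
  have hDDinj : Function.Injective (TensorProduct.dualDistrib ℂ V W) := by
    have hco : ⇑(TensorProduct.dualDistrib ℂ V W) = ⇑(TensorProduct.dualDistribEquiv ℂ V W) :=
      rfl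
    rw [hco]
    exact (TensorProduct.dualDistribEquiv ℂ V W).injective
  -- nondegeneracy of the tensor form
  have hBTnd : ∀ x : V ⊗[ℂ] W, (∀ y : V ⊗[ℂ] W, BT x y = 0) → x = 0 := by
    intro x hx
    have h1 : TensorProduct.dualDistrib ℂ V W (TensorProduct.map BV BW x) = 0 :=
      LinearMap.ext fun y => hx y
    have h2 : TensorProduct.map BV BW x = 0 := hDDinj (by rw [h1, map_zero])
    exact hmapinj (by rw [h2, map_zero])
  -- the tensor map is an isometry of the tensor form
  have hBTiso : ∀ x y : V ⊗[ℂ] W, BT (F x) (F y) = BT x y := by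
    intro x y
    induction x using TensorProduct.induction_on with
    | zero => simp
    | tmul v w =>
      induction y using TensorProduct.induction_on with
      | zero => simp
      | tmul v' w' =>
        rw [hF]
        simp only [TensorProduct.map_tmul, LinearEquiv.coe_coe]
        rw [hBT, hBT, hgiso, hhiso]
      | add y1 y2 hy1 hy2 =>
        simp only [map_add, hy1, hy2]
    | add x1 x2 h1 h2 =>
      simp only [map_add, LinearMap.add_apply, h1, h2]
  -- F is diagonalizable
  have hFdiag : (⨆ c : ℂ, Module.End.eigenspace F c) = ⊤ :=
    aux_tensor_diag _ _ hdg hdh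
  -- F is injective
  have hFinj : Function.Injective F := by
    have heq : F = (TensorProduct.congr g h).toLinearMap :=
      TensorProduct.ext' fun v w => by simp [hF, TensorProduct.congr_tmul]
    rw [heq]
    exact (TensorProduct.congr g h).injective
  -- determinant computations
  have hdet1 : LinearMap.det F = (-1 : ℂ) ^ finrank ℂ (Module.End.eigenspace F (-1)) :=
    aux_det_eq_neg_one_pow F BT hBTnd hBTiso hFdiag hFinj
  have hdet2 : LinearMap.det F = (-1 : ℂ) ^ finrank ℂ W := by
    rw [hF, ← LinearMap.det_toMatrix
        ((finBasis ℂ V).tensorProduct (finBasis ℂ W)), TensorProduct.toMatrix_map,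
      Matrix.det_kronecker, LinearMap.det_toMatrix, LinearMap.det_toMatrix, hgdet, hhdet]
    simp
  exact neg_one_pow_modeq_of_eq (hdet1.symm.trans hdet2)
end

section
/- Let V be a finite-dimensional complex vector space with a nondegenerate symmetric bilinear form and W a finite-dimensional complex vector space with a nondegenerate alternating bilinear form. Let g and h be diagonalizable linear automorphisms of V and W that are isometries of the respective forms. Then dim E_{−1}(g ⊗ h) is even. -/
open TensorProduct

open Module LinearMap

universe u

lemma even_finrank_of_isAlt_nondeg :
    ∀ (n : ℕ) (V : Type u) [AddCommGroup V] [Module ℂ V] [FiniteDimensional ℂ V]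
      (B : LinearMap.BilinForm ℂ V), B.IsAlt → B.Nondegenerate →
      Module.finrank ℂ V = n → Even n := by
  intro n
  induction n using Nat.strong_induction_on with
  | _ n IH =>
  intro V _ _ _ B halt hnd hrank
  rcases Nat.eq_zero_or_pos n with h0 | hpos
  · simp [h0]
  have hnt : Nontrivial V := Module.nontrivial_of_finrank_pos (R := ℂ) (hrank ▸ hpos)
  obtain ⟨x, hx⟩ := exists_ne (0 : V)
  have hex : ∃ y, B x y ≠ 0 := by
    by_contra hc; push_neg at hc; exact hx (hnd.1 x hc)
  obtain ⟨y, hxy⟩ := hex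
  have hy0 : y ≠ 0 := by rintro rfl; simp at hxy
  have hrefl : B.IsRefl := halt.isRefl
  set U : Submodule ℂ V := Submodule.span ℂ {x, y} with hU
  have hxU : x ∈ U := Submodule.subset_span (by simp)
  have hyU : y ∈ U := Submodule.subset_span (by simp)
  -- restriction to U is nondegenerate
  have hUnd : (B.restrict U).Nondegenerate := by
    refine (LinearMap.IsRefl.nondegenerate_iff_separatingLeft (B := B.restrict U)
      (fun a b hab => hrefl a b hab)).mpr ?_
    rintro ⟨u, hu⟩ hu0
    rw [Submodule.mem_span_pair] at hu
    obtain ⟨a, b, rfl⟩ := hu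
    have h1 := hu0 ⟨y, hyU⟩
    have h2 := hu0 ⟨x, hxU⟩
    simp only [LinearMap.BilinForm.restrict_apply, LinearMap.domRestrict_apply, map_add, map_smul,
      LinearMap.add_apply, LinearMap.smul_apply, smul_eq_mul, halt x, halt y, mul_zero,
      add_zero, zero_add] at h1 h2
    have ha : a = 0 := by
      rcases mul_eq_zero.mp h1 with h | h
      · exact h
      · exact absurd h hxy
    have hyx : B y x ≠ 0 := by
      rw [← halt.neg_eq]; simpa using hxy
    have hb : b = 0 := by
      rcases mul_eq_zero.mp h2 with h | h
      · exact h
      · exact absurd h hyx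
    subst ha hb
    ext
    simp
  -- U is 2-dimensional
  have hli : LinearIndependent ℂ ![x, y] := by
    rw [LinearIndependent.pair_iff]
    intro s t hst
    have h1 : B (s • x + t • y) y = 0 := by rw [hst]; simp
    simp only [map_add, map_smul, LinearMap.add_apply, LinearMap.smul_apply, smul_eq_mul,
      halt y, mul_zero, add_zero] at h1
    have hs : s = 0 := by
      rcases mul_eq_zero.mp h1 with h | h
      · exact h
      · exact absurd h hxy
    subst hs
    simp only [zero_smul, zero_add] at hst
    exact ⟨rfl, by rcases smul_eq_zero.mp hst with h | h; exact h; exact absurd h hy0⟩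
  have hrange : Set.range ![x, y] = {x, y} := by
    simp [Matrix.range_cons, Matrix.range_empty, Set.pair_comm]
  have hUrank : Module.finrank ℂ U = 2 := by
    have := finrank_span_eq_card hli
    rw [hrange] at this
    simpa using this
  -- orthogonal complement
  have hcompl := B.isCompl_orthogonal_of_restrict_nondegenerate hrefl hUnd
  set O := B.orthogonal U with hO
  have hOnd : (B.restrict O).Nondegenerate := by
    refine (LinearMap.IsRefl.nondegenerate_iff_separatingLeft (B := B.restrict O)
      (fun a b hab => hrefl a b hab)).mpr ?_
    rintro ⟨m, hm⟩ hm0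
    have hall : ∀ z : V, B m z = 0 := by
      intro z
      have hz : z ∈ U ⊔ O := by rw [hcompl.sup_eq_top]; trivial
      obtain ⟨u, hu, o, ho, rfl⟩ := Submodule.mem_sup.1 hz
      have h1 : B m u = 0 := hrefl u m (hm u hu)
      have h2 : B m o = 0 := hm0 ⟨o, ho⟩
      simp [h1, h2]
    exact Subtype.ext (hnd.1 m hall)
  have hOalt : (B.restrict O).IsAlt := fun z => halt z.1
  have hsum : Module.finrank ℂ U + Module.finrank ℂ O = n := by
    rw [Submodule.finrank_add_eq_of_isCompl hcompl, hrank]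
  rw [hUrank] at hsum
  have hlt : Module.finrank ℂ O < n := by omega
  obtain ⟨r, hr⟩ := IH _ hlt O (B.restrict O) hOalt hOnd rfl
  exact ⟨r + 1, by omega⟩


/-- Let `V` be a finite-dimensional complex vector space with a
nondegenerate symmetric bilinear form and `W` a finite-dimensional complex vector space
with a nondegenerate alternating bilinear form.  If `g` and `h` are diagonalizable
isometries of `V` and `W` respectively, then `dim E_{-1}(g ⊗ h)` is even. -/
theorem dim_minus_one_eigenspace_orth_tensor_symp_even
    (V W : Type*) [AddCommGroup V] [Module ℂ V] [FiniteDimensional ℂ V]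
    [AddCommGroup W] [Module ℂ W] [FiniteDimensional ℂ W]
    (BV : V →ₗ[ℂ] V →ₗ[ℂ] ℂ) (BW : W →ₗ[ℂ] W →ₗ[ℂ] ℂ)
    (hVsymm : ∀ v w : V, BV v w = BV w v)
    (hVnd : ∀ v : V, (∀ w : V, BV v w = 0) → v = 0)
    (hWalt : ∀ v : W, BW v v = 0)
    (hWnd : ∀ v : W, (∀ w : W, BW v w = 0) → v = 0)
    (g : V ≃ₗ[ℂ] V) (h : W ≃ₗ[ℂ] W)
    (hdg : (⨆ μ : ℂ, Module.End.eigenspace (g : V →ₗ[ℂ] V) μ) = ⊤)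
    (hdh : (⨆ μ : ℂ, Module.End.eigenspace (h : W →ₗ[ℂ] W) μ) = ⊤)
    (hgiso : ∀ v w : V, BV (g v) (g w) = BV v w)
    (hhiso : ∀ v w : W, BW (h v) (h w) = BW v w) :
    Even (Module.finrank ℂ
      (Module.End.eigenspace (TensorProduct.map (g : V →ₗ[ℂ] V) (h : W →ₗ[ℂ] W)) (-1))) := by
  -- notation
  set gl : V →ₗ[ℂ] V := (g : V →ₗ[ℂ] V) with hgl
  set hl : W →ₗ[ℂ] W := (h : W →ₗ[ℂ] W) with hhl
  set k : V ⊗[ℂ] W →ₗ[ℂ] V ⊗[ℂ] W := TensorProduct.map gl hl with hk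
  -- the tensor product bilinear form
  set B : LinearMap.BilinForm ℂ (V ⊗[ℂ] W) :=
    (TensorProduct.dualDistrib ℂ V W) ∘ₗ TensorProduct.map BV BW with hB
  have hBapply : ∀ (v : V) (w : W) (v' : V) (w' : W),
      B (v ⊗ₜ[ℂ] w) (v' ⊗ₜ[ℂ] w') = BV v v' * BW w w' := by
    intro v w v' w'
    simp [hB, TensorProduct.dualDistrib_apply]
  -- skewness of BW
  have hWskew : ∀ w w' : W, BW w w' = - BW w' w := by
    intro w w'
    have h1 := hWalt (w + w')
    simp only [map_add, LinearMap.add_apply, hWalt w, hWalt w'] at h1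
    linear_combination h1
  -- B is skew-symmetric
  have hBskew : ∀ x y : V ⊗[ℂ] W, B x y = - B y x := by
    intro x
    induction x using TensorProduct.induction_on with
    | zero => intro y; simp
    | tmul v w =>
      intro y
      induction y using TensorProduct.induction_on with
      | zero => simp
      | tmul v' w' =>
        rw [hBapply, hBapply, hVsymm v v', hWskew w w']
        ring
      | add a b ha hb => simp only [map_add, LinearMap.add_apply, ha, hb]; ring
    | add a b ha hb =>
      intro y
      simp only [map_add, LinearMap.add_apply, ha y, hb y]
      ring
  have hBalt : B.IsAlt := by
    intro x
    have h1 := hBskew x x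
    linear_combination (1/2 : ℂ) * h1
  -- B is nondegenerate
  have hBnd : B.Nondegenerate := by
    have hBVinj : Function.Injective BV := by
      rw [← LinearMap.ker_eq_bot]
      exact LinearMap.ker_eq_bot'.mpr fun v hv => hVnd v (fun w => by rw [hv]; rfl)
    have hBWinj : Function.Injective BW := by
      rw [← LinearMap.ker_eq_bot]
      exact LinearMap.ker_eq_bot'.mpr fun v hv => hWnd v (fun w => by rw [hv]; rfl)
    have hmapinj : Function.Injective (TensorProduct.map BV BW) := by
      rw [← LinearMap.rTensor_comp_lTensor]
      exact (Module.Flat.rTensor_preserves_injective_linearMap BV hBVinj).comp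
        (Module.Flat.lTensor_preserves_injective_linearMap BW hBWinj)
    have hddinj : Function.Injective (TensorProduct.dualDistrib ℂ V W) :=
      fun a b hab => (TensorProduct.dualDistribEquivOfBasis
        (Module.Free.chooseBasis ℂ V) (Module.Free.chooseBasis ℂ W)).injective hab
    refine (LinearMap.IsRefl.nondegenerate_iff_separatingLeft (B := B)
      (fun a b hab => hBalt.isRefl a b hab)).mpr ?_
    intro x hx
    have hx' : B x = 0 := LinearMap.ext hx
    have : (TensorProduct.dualDistrib ℂ V W) ((TensorProduct.map BV BW) x) =
        (TensorProduct.dualDistrib ℂ V W) ((TensorProduct.map BV BW) 0) := by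
      simpa [hB] using hx'
    exact hmapinj (hddinj this)
  -- k is an isometry of B
  have hkiso : ∀ x y : V ⊗[ℂ] W, B (k x) (k y) = B x y := by
    intro x
    induction x using TensorProduct.induction_on with
    | zero => intro y; simp
    | tmul v w =>
      intro y
      induction y using TensorProduct.induction_on with
      | zero => simp
      | tmul v' w' =>
        rw [hk, TensorProduct.map_tmul, TensorProduct.map_tmul, hBapply, hBapply]
        rw [hgl, hhl]
        simp only [LinearEquiv.coe_coe]
        rw [hgiso, hhiso]
      | add a b ha hb => simp only [map_add, LinearMap.add_apply, ha, hb]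
    | add a b ha hb =>
      intro y
      simp only [map_add, LinearMap.add_apply, ha y, hb y]
  -- eigenvectors tensor to eigenvectors
  have heig : ∀ (lam mu : ℂ) (v : V) (w : W), v ∈ Module.End.eigenspace gl lam →
      w ∈ Module.End.eigenspace hl mu →
      v ⊗ₜ[ℂ] w ∈ Module.End.eigenspace k (lam * mu) := by
    intro lam mu v w hv hw
    rw [Module.End.mem_eigenspace_iff] at hv hw ⊢
    rw [hk, TensorProduct.map_tmul, hv, hw, TensorProduct.smul_tmul_smul]
  -- k is diagonalizable
  have hdk : (⨆ ν : ℂ, Module.End.eigenspace k ν) = ⊤ := by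
    rw [eq_top_iff, ← TensorProduct.span_tmul_eq_top ℂ V W, Submodule.span_le]
    rintro _ ⟨v, w, rfl⟩
    have hv : v ∈ ⨆ μ : ℂ, Module.End.eigenspace gl μ := by rw [hdg]; trivial
    refine Submodule.iSup_induction (motive := fun v : V =>
        ∀ w : W, v ⊗ₜ[ℂ] w ∈ ⨆ ν : ℂ, Module.End.eigenspace k ν) _ hv ?_ ?_ ?_ w
    · intro lam v hv w
      have hw : w ∈ ⨆ μ : ℂ, Module.End.eigenspace hl μ := by rw [hdh]; trivial
      refine Submodule.iSup_induction (motive := fun w : W =>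
          v ⊗ₜ[ℂ] w ∈ ⨆ ν : ℂ, Module.End.eigenspace k ν) _ hw ?_ ?_ ?_
      · intro mu w hw
        exact Submodule.mem_iSup_of_mem (lam * mu) (heig lam mu v w hv hw)
      · show v ⊗ₜ[ℂ] (0 : W) ∈ _
        rw [TensorProduct.tmul_zero]; exact Submodule.zero_mem _
      · intro a b ha hb
        show v ⊗ₜ[ℂ] (a + b) ∈ _
        rw [TensorProduct.tmul_add]; exact Submodule.add_mem _ ha hb
    · intro w
      show (0 : V) ⊗ₜ[ℂ] w ∈ _
      rw [TensorProduct.zero_tmul]; exact Submodule.zero_mem _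
    · intro a b ha hb w
      show (a + b) ⊗ₜ[ℂ] w ∈ _
      rw [TensorProduct.add_tmul]; exact Submodule.add_mem _ (ha w) (hb w)
  -- the (-1)-eigenspace
  set E : Submodule ℂ (V ⊗[ℂ] W) := Module.End.eigenspace k (-1) with hE
  have hEnd : (B.restrict E).Nondegenerate := by
    refine (LinearMap.IsRefl.nondegenerate_iff_separatingLeft (B := B.restrict E)
      (fun a b hab => hBalt.isRefl a b hab)).mpr ?_
    rintro ⟨x, hx⟩ hx0
    have hkx : k x = -x := by
      have := Module.End.mem_eigenspace_iff.mp hx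
      simpa using this
    have hxall : ∀ y : V ⊗[ℂ] W, B x y = 0 := by
      intro y
      have hy : y ∈ ⨆ ν : ℂ, Module.End.eigenspace k ν := by rw [hdk]; trivial
      refine Submodule.iSup_induction (motive := fun y : V ⊗[ℂ] W => B x y = 0) _ hy ?_ (map_zero _) ?_
      · intro ν y hyν
        by_cases hν : ν = -1
        · subst hν
          simpa using hx0 ⟨y, hyν⟩
        · have h1 : B (k x) (k y) = B x y := hkiso x y
          have h3 : k y = ν • y := Module.End.mem_eigenspace_iff.mp hyν
          rw [hkx, h3, map_neg, LinearMap.neg_apply, map_smul, smul_eq_mul] at h1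
          have h4 : (ν + 1) * B x y = 0 := by linear_combination -h1
          rcases mul_eq_zero.mp h4 with h5 | h5
          · exact absurd (by linear_combination h5) hν
          · exact h5
      · intro a b ha hb
        rw [map_add, ha, hb, add_zero]
    exact Subtype.ext (hBnd.1 x hxall)
  have hEalt : (B.restrict E).IsAlt := fun z => hBalt z.1
  exact even_finrank_of_isAlt_nondeg (Module.finrank ℂ E) E (B.restrict E) hEalt hEnd rfl
end

section
/- Let V and W be finite-dimensional complex vector spaces each equipped with a nondegenerate alternating bilinear form, and let g and h be diagonalizable linear automorphisms of V and W that are isometries of the respective forms. Then dim E_{−1}(g ⊗ h) is even. -/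
open TensorProduct

section AuxLemmas

open Module Matrix
lemma aux_even_finrank_of_alt_nondeg {M : Type*} [AddCommGroup M] [Module ℂ M]
    [FiniteDimensional ℂ M] (C : M →ₗ[ℂ] M →ₗ[ℂ] ℂ)
    (halt : ∀ x, C x x = 0) (hnd : ∀ x, (∀ y, C x y = 0) → x = 0) :
    Even (Module.finrank ℂ M) := by
  classical
  have hskew : ∀ x y, C x y = - C y x := by
    intro x y
    have h0 := halt (x + y)
    simp only [map_add, LinearMap.add_apply, halt x, halt y] at h0
    linear_combination h0
  set n := Module.finrank ℂ M with hn
  let b : Basis (Fin n) ℂ M := Module.finBasis ℂ M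
  have hdet : (BilinForm.toMatrix b C).det ≠ 0 :=
    (LinearMap.BilinForm.nondegenerate_iff_det_ne_zero b).mp
      ((LinearMap.IsRefl.nondegenerate_iff_separatingLeft
        (fun x y hxy => by rw [hskew y x, hxy, neg_zero])).mpr hnd)
  have htr : (BilinForm.toMatrix b C)ᵀ = - BilinForm.toMatrix b C := by
    ext i j
    rw [Matrix.transpose_apply, Matrix.neg_apply]
    have e1 := LinearMap.BilinForm.toMatrix_apply b C j i
    have e2 := LinearMap.BilinForm.toMatrix_apply b C i j
    exact e1.trans ((hskew (b j) (b i)).trans (congrArg Neg.neg e2.symm))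
  have h1 : (BilinForm.toMatrix b C).det = (-1 : ℂ) ^ n * (BilinForm.toMatrix b C).det := by
    conv_lhs => rw [← Matrix.det_transpose, htr]
    rw [Matrix.det_neg]
    simp
  have h2 : ((-1 : ℂ) ^ n) = 1 := by
    have h3 : (-1 : ℂ) ^ n * (BilinForm.toMatrix b C).det
        = 1 * (BilinForm.toMatrix b C).det := by rw [one_mul]; exact h1.symm
    exact mul_right_cancel₀ hdet h3
  exact (neg_one_pow_eq_one_iff_even (by norm_num : (-1 : ℂ) ≠ 1)).mp h2

section pairing

variable {V : Type*} [AddCommGroup V] [Module ℂ V] [FiniteDimensional ℂ V]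
  (B : V →ₗ[ℂ] V →ₗ[ℂ] ℂ) (g : V ≃ₗ[ℂ] V)

/-- Eigenvectors for `λ`, `μ` with `λμ ≠ 1` are orthogonal for an invariant form. -/
lemma aux_orth (hiso : ∀ v w : V, B (g v) (g w) = B v w) {l m : ℂ} (hne : l * m ≠ 1) {x y : V}
    (hx : x ∈ Module.End.eigenspace (g : V →ₗ[ℂ] V) l)
    (hy : y ∈ Module.End.eigenspace (g : V →ₗ[ℂ] V) m) :
    B x y = 0 := by
  rw [Module.End.mem_eigenspace_iff] at hx hy
  have h1 : B ((g : V →ₗ[ℂ] V) x) ((g : V →ₗ[ℂ] V) y) = B x y := hiso x y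
  rw [hx, hy] at h1
  simp only [_root_.map_smul, LinearMap.smul_apply, smul_eq_mul] at h1
  have : (l * m - 1) * B x y = 0 := by ring_nf; linear_combination h1
  rcases mul_eq_zero.mp this with h | h
  · exact absurd (by linear_combination h : l * m = 1) hne
  · exact h

lemma aux_pair_nondeg (hiso : ∀ v w : V, B (g v) (g w) = B v w) (hnd : ∀ v : V, (∀ w : V, B v w = 0) → v = 0)
    (hdg : (⨆ μ : ℂ, Module.End.eigenspace (g : V →ₗ[ℂ] V) μ) = ⊤)
    {l : ℂ} {x : V} (hx : x ∈ Module.End.eigenspace (g : V →ₗ[ℂ] V) l)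
    (hbot : ∀ y ∈ Module.End.eigenspace (g : V →ₗ[ℂ] V) l⁻¹, B x y = 0) :
    x = 0 := by
  apply hnd
  intro w
  have hw : w ∈ ⨆ μ : ℂ, Module.End.eigenspace (g : V →ₗ[ℂ] V) μ := hdg ▸ Submodule.mem_top
  induction hw using Submodule.iSup_induction' with
  | mem m y hy =>
    by_cases hlm : l * m = 1
    · have hl0 : l ≠ 0 := by rintro rfl; simp at hlm
      have : m = l⁻¹ := by field_simp; linear_combination hlm
      exact hbot y (this ▸ hy)
    · exact aux_orth B g hiso hlm hx hy
  | zero => simp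
  | add y z _ _ hy hz => simp [map_add, hy, hz]

end pairing

section pairing2

variable {V : Type*} [AddCommGroup V] [Module ℂ V] [FiniteDimensional ℂ V]
  (B : V →ₗ[ℂ] V →ₗ[ℂ] ℂ) (g : V ≃ₗ[ℂ] V)

lemma aux_finrank_le (hiso : ∀ v w : V, B (g v) (g w) = B v w)
    (hnd : ∀ v : V, (∀ w : V, B v w = 0) → v = 0)
    (hdg : (⨆ μ : ℂ, Module.End.eigenspace (g : V →ₗ[ℂ] V) μ) = ⊤) (l : ℂ) :
    finrank ℂ (Module.End.eigenspace (g : V →ₗ[ℂ] V) l)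
      ≤ finrank ℂ (Module.End.eigenspace (g : V →ₗ[ℂ] V) l⁻¹) := by
  set E₁ := Module.End.eigenspace (g : V →ₗ[ℂ] V) l
  set E₂ := Module.End.eigenspace (g : V →ₗ[ℂ] V) l⁻¹
  let L : E₁ →ₗ[ℂ] Module.Dual ℂ E₂ := (B.compl₂ E₂.subtype).domRestrict E₁
  have hinj : Function.Injective L := by
    rw [← LinearMap.ker_eq_bot, LinearMap.ker_eq_bot']
    intro x hx
    have : (x : V) = 0 := by
      apply aux_pair_nondeg B g hiso hnd hdg x.2
      intro y hy
      have := congrFun (congrArg (fun f : Module.Dual ℂ E₂ => f.toFun) hx) ⟨y, hy⟩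
      simpa [L] using this
    exact Subtype.ext this
  calc finrank ℂ E₁ ≤ finrank ℂ (Module.Dual ℂ E₂) :=
        LinearMap.finrank_le_finrank_of_injective hinj
    _ = finrank ℂ E₂ := Subspace.dual_finrank_eq

lemma aux_finrank_eigen_inv (hiso : ∀ v w : V, B (g v) (g w) = B v w)
    (hnd : ∀ v : V, (∀ w : V, B v w = 0) → v = 0)
    (hdg : (⨆ μ : ℂ, Module.End.eigenspace (g : V →ₗ[ℂ] V) μ) = ⊤) (l : ℂ) :
    finrank ℂ (Module.End.eigenspace (g : V →ₗ[ℂ] V) l)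
      = finrank ℂ (Module.End.eigenspace (g : V →ₗ[ℂ] V) l⁻¹) := by
  refine le_antisymm (aux_finrank_le B g hiso hnd hdg l) ?_
  have := aux_finrank_le B g hiso hnd hdg l⁻¹
  rwa [inv_inv] at this

lemma aux_even_eigen_sq_one (hiso : ∀ v w : V, B (g v) (g w) = B v w)
    (hnd : ∀ v : V, (∀ w : V, B v w = 0) → v = 0)
    (halt : ∀ v : V, B v v = 0)
    (hdg : (⨆ μ : ℂ, Module.End.eigenspace (g : V →ₗ[ℂ] V) μ) = ⊤)
    {l : ℂ} (hsq : l * l = 1) :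
    Even (finrank ℂ (Module.End.eigenspace (g : V →ₗ[ℂ] V) l)) := by
  set E₁ := Module.End.eigenspace (g : V →ₗ[ℂ] V) l with hE
  have hl0 : l ≠ 0 := by rintro rfl; simp at hsq
  have hlinv : l⁻¹ = l := by field_simp; linear_combination hsq.symm
  let C : E₁ →ₗ[ℂ] E₁ →ₗ[ℂ] ℂ := (B.compl₂ E₁.subtype).domRestrict E₁
  apply aux_even_finrank_of_alt_nondeg C
  · intro x; simpa [C] using halt (x : V)
  · intro x hx
    apply Subtype.ext
    apply aux_pair_nondeg B g hiso hnd hdg x.2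
    intro y hy
    rw [hlinv] at hy
    simpa [C] using hx ⟨y, hy⟩

end pairing2


/-- If a family of submodules `F ν ≤ E_ν(k)` spans everything, then `F ν = E_ν(k)`. -/
lemma aux_eigenspace_eq {M : Type*} [AddCommGroup M] [Module ℂ M]
    (k : Module.End ℂ M) (F : ℂ → Submodule ℂ M)
    (hle : ∀ ν, F ν ≤ k.eigenspace ν) (htop : (⨆ ν, F ν) = ⊤) (ν : ℂ) :
    k.eigenspace ν = F ν := by
  refine le_antisymm ?_ (hle ν)
  intro x hx
  have hx' : x ∈ F ν ⊔ ⨆ μ, ⨆ _ : μ ≠ ν, k.eigenspace μ := by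
    have hsub : (⨆ μ, F μ) ≤ F ν ⊔ ⨆ μ, ⨆ _ : μ ≠ ν, k.eigenspace μ := by
      refine iSup_le fun μ => ?_
      by_cases hμ : μ = ν
      · exact hμ ▸ le_sup_left
      · exact le_trans (le_trans (hle μ) (le_iSup₂ (f := fun μ _ => k.eigenspace μ) μ hμ))
          le_sup_right
    exact hsub (htop ▸ Submodule.mem_top)
  obtain ⟨y, hy, z, hz, hxyz⟩ := Submodule.mem_sup.mp hx'
  have hzE : z ∈ k.eigenspace ν := by
    have : z = x - y := by rw [← hxyz]; abel
    rw [this]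
    exact Submodule.sub_mem _ hx (hle ν hy)
  have hz0 : z = 0 :=
    Submodule.disjoint_def.mp (Module.End.eigenspaces_iSupIndep k ν) z hzE hz
  rw [← hxyz, hz0, add_zero]
  exact hy

/-- finrank of a finite independent supremum is the sum of finranks. -/
lemma aux_finrank_biSup {M : Type*} [AddCommGroup M] [Module ℂ M] [FiniteDimensional ℂ M]
    (T : ℂ → Submodule ℂ M) (hind : iSupIndep T) (s : Finset ℂ) :
    finrank ℂ (⨆ l ∈ s, T l : Submodule ℂ M) = ∑ l ∈ s, finrank ℂ (T l) := by
  classical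
  induction s using Finset.induction_on with
  | empty => simp
  | @insert a s ha ih =>
    have hsup : (⨆ l ∈ insert a s, T l : Submodule ℂ M) = T a ⊔ ⨆ l ∈ s, T l := by
      rw [Finset.iSup_insert]
    have hdisj : Disjoint (T a) (⨆ l ∈ s, T l : Submodule ℂ M) := by
      refine (hind a).mono_right ?_
      refine iSup_le fun l => iSup_le fun hl => ?_
      exact le_iSup₂ (f := fun j (_ : j ≠ a) => T j) l (by rintro rfl; exact ha hl)
    have hinf : (T a ⊓ ⨆ l ∈ s, T l : Submodule ℂ M) = ⊥ := disjoint_iff.mp hdisj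
    have := Submodule.finrank_sup_add_finrank_inf_eq (T a) (⨆ l ∈ s, T l : Submodule ℂ M)
    rw [hinf] at this
    simp only [finrank_bot, add_zero] at this
    rw [hsup, Finset.sum_insert ha, ← ih, this]



end AuxLemmas

open Module Matrix in
/-- Let `V` and `W` be finite-dimensional complex vector spaces, each
with a nondegenerate alternating bilinear form, and let `g, h` be diagonalizable
isometries of `V, W` respectively.  Then `dim E_{-1}(g ⊗ h)` is even. -/
theorem dim_minus_one_eigenspace_symp_tensor_symp_even
    (V W : Type*) [AddCommGroup V] [Module ℂ V] [FiniteDimensional ℂ V]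
    [AddCommGroup W] [Module ℂ W] [FiniteDimensional ℂ W]
    (BV : V →ₗ[ℂ] V →ₗ[ℂ] ℂ) (BW : W →ₗ[ℂ] W →ₗ[ℂ] ℂ)
    (hValt : ∀ v : V, BV v v = 0)
    (hVnd : ∀ v : V, (∀ w : V, BV v w = 0) → v = 0)
    (hWalt : ∀ v : W, BW v v = 0)
    (hWnd : ∀ v : W, (∀ w : W, BW v w = 0) → v = 0)
    (g : V ≃ₗ[ℂ] V) (h : W ≃ₗ[ℂ] W)
    (hdg : (⨆ μ : ℂ, Module.End.eigenspace (g : V →ₗ[ℂ] V) μ) = ⊤)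
    (hdh : (⨆ μ : ℂ, Module.End.eigenspace (h : W →ₗ[ℂ] W) μ) = ⊤)
    (hgiso : ∀ v w : V, BV (g v) (g w) = BV v w)
    (hhiso : ∀ v w : W, BW (h v) (h w) = BW v w) :
    Even (Module.finrank ℂ
      (Module.End.eigenspace (TensorProduct.map (g : V →ₗ[ℂ] V) (h : W →ₗ[ℂ] W)) (-1))) := by
  classical
  set gl : V →ₗ[ℂ] V := (g : V →ₗ[ℂ] V) with hgl
  set hl : W →ₗ[ℂ] W := (h : W →ₗ[ℂ] W) with hhl
  set k : Module.End ℂ (V ⊗[ℂ] W) := TensorProduct.map gl hl with hk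
  set Eg : ℂ → Submodule ℂ V := fun l => Module.End.eigenspace gl l with hEg
  set Eh : ℂ → Submodule ℂ W := fun m => Module.End.eigenspace hl m with hEh
  set T : ℂ → ℂ → Submodule ℂ (V ⊗[ℂ] W) := fun l m =>
    LinearMap.range (TensorProduct.map (Eg l).subtype (Eh m).subtype) with hT
  -- (f1) T l m is inside the (l*m)-eigenspace of k
  have f1 : ∀ l m : ℂ, T l m ≤ Module.End.eigenspace k (l * m) := by
    intro l m
    rintro x ⟨t, rfl⟩
    induction t using TensorProduct.induction_on with
    | zero => simp only [map_zero]; exact Submodule.zero_mem _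
    | tmul v w =>
      rw [Module.End.mem_eigenspace_iff]
      have hv : gl (v : V) = l • (v : V) := Module.End.mem_eigenspace_iff.mp v.2
      have hw : hl (w : W) = m • (w : W) := Module.End.mem_eigenspace_iff.mp w.2
      simp only [TensorProduct.map_tmul, Submodule.coe_subtype, hk, hv, hw,
        TensorProduct.smul_tmul', TensorProduct.tmul_smul, smul_smul]
      rw [mul_comm]
    | add t₁ t₂ h₁ h₂ =>
      rw [map_add]
      exact Submodule.add_mem _ h₁ h₂
  -- (f1') T l m is inside the l-eigenspace of g ⊗ 1
  set a : Module.End ℂ (V ⊗[ℂ] W) := TensorProduct.map gl LinearMap.id with ha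
  have f1' : ∀ l m : ℂ, T l m ≤ Module.End.eigenspace a l := by
    intro l m
    rintro x ⟨t, rfl⟩
    induction t using TensorProduct.induction_on with
    | zero => simp only [map_zero]; exact Submodule.zero_mem _
    | tmul v w =>
      rw [Module.End.mem_eigenspace_iff]
      have hv : gl (v : V) = l • (v : V) := Module.End.mem_eigenspace_iff.mp v.2
      simp only [TensorProduct.map_tmul, Submodule.coe_subtype, ha, hv, LinearMap.id_coe, id_eq,
        TensorProduct.smul_tmul']
    | add t₁ t₂ h₁ h₂ =>
      rw [map_add]
      exact Submodule.add_mem _ h₁ h₂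
  -- (f2) the T l m span everything
  have f2 : (⨆ l : ℂ, ⨆ m : ℂ, T l m) = ⊤ := by
    set S : Submodule ℂ (V ⊗[ℂ] W) := ⨆ l : ℂ, ⨆ m : ℂ, T l m with hS
    have key1 : ∀ (l : ℂ) (v : V), v ∈ Eg l → ∀ w : W, v ⊗ₜ[ℂ] w ∈ S := by
      intro l v hv w
      have hw : w ∈ ⨆ m : ℂ, Eh m := hdh ▸ Submodule.mem_top
      induction hw using Submodule.iSup_induction' with
      | mem m y hy =>
        have : v ⊗ₜ[ℂ] y ∈ T l m :=
          ⟨(⟨v, hv⟩ : Eg l) ⊗ₜ[ℂ] (⟨y, hy⟩ : Eh m), rfl⟩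
        exact le_iSup₂ (f := fun l m => T l m) l m this
      | zero => rw [TensorProduct.tmul_zero]; exact Submodule.zero_mem _
      | add y z _ _ hy hz =>
        rw [TensorProduct.tmul_add]
        exact Submodule.add_mem _ hy hz
    have key2 : ∀ (v : V) (w : W), v ⊗ₜ[ℂ] w ∈ S := by
      intro v w
      have hv : v ∈ ⨆ l : ℂ, Eg l := hdg ▸ Submodule.mem_top
      induction hv using Submodule.iSup_induction' with
      | mem l y hy => exact key1 l y hy w
      | zero => rw [TensorProduct.zero_tmul]; exact Submodule.zero_mem _
      | add y z _ _ hy hz =>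
        rw [TensorProduct.add_tmul]
        exact Submodule.add_mem _ hy hz
    rw [eq_top_iff, ← TensorProduct.span_tmul_eq_top ℂ V W, Submodule.span_le]
    rintro x ⟨v, w, rfl⟩
    exact key2 v w
  -- k is injective
  have hkinj : Function.Injective k := by
    have : k = (TensorProduct.congr g h).toLinearMap := by
      rfl
    rw [this]
    exact (TensorProduct.congr g h).injective
  have hEg0 : Eg 0 = ⊥ := by
    rw [hEg]
    simp only [Module.End.eigenspace_zero]
    rw [LinearMap.ker_eq_bot]
    exact g.injective
  -- the grouped family
  set F : ℂ → Submodule ℂ (V ⊗[ℂ] W) := fun ν => ⨆ l : ℂ, T l (l⁻¹ * ν) with hF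
  have hFle : ∀ ν, F ν ≤ Module.End.eigenspace k ν := by
    intro ν
    refine iSup_le fun l => ?_
    by_cases hl0 : l = 0
    · subst hl0
      intro x hx
      have hx0 : x ∈ Module.End.eigenspace k (0 * (0⁻¹ * ν)) := f1 0 (0⁻¹ * ν) hx
      rw [zero_mul, Module.End.eigenspace_zero, LinearMap.mem_ker] at hx0
      have hx1 : x = 0 := hkinj (by rw [hx0, map_zero])
      rw [hx1]
      exact Submodule.zero_mem _
    · have heq : l * (l⁻¹ * ν) = ν := by field_simp
      have h1 := f1 l (l⁻¹ * ν)
      rwa [heq] at h1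
  have hFtop : (⨆ ν, F ν) = ⊤ := by
    rw [eq_top_iff, ← f2]
    refine iSup_le fun l => iSup_le fun m => ?_
    by_cases hl0 : l = 0
    · subst hl0
      have hbot : T 0 m ≤ ⊥ := by
        have h1 := f1 0 m
        rw [zero_mul, Module.End.eigenspace_zero, LinearMap.ker_eq_bot.mpr hkinj] at h1
        exact h1
      exact le_trans hbot bot_le
    · have hTle : T l m ≤ F (l * m) := by
        have h1 : T l (l⁻¹ * (l * m)) ≤ F (l * m) :=
          le_iSup (fun l' => T l' (l'⁻¹ * (l * m))) l
        have heq : l⁻¹ * (l * m) = m := by field_simp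
        rwa [heq] at h1
      exact le_trans hTle (le_iSup F (l * m))
  -- (f4) identify the eigenspace
  have f4 : Module.End.eigenspace k (-1) = F (-1) := aux_eigenspace_eq k F hFle hFtop (-1)
  -- dimension of T l m
  set d : ℂ → ℕ := fun l => finrank ℂ (Eg l) with hdd
  set e : ℂ → ℕ := fun m => finrank ℂ (Eh m) with hee
  have hdim : ∀ l m : ℂ, finrank ℂ (T l m) = d l * e m := by
    intro l m
    have hinj : Function.Injective (TensorProduct.map (Eg l).subtype (Eh m).subtype) := by
      rw [← LinearMap.lTensor_comp_rTensor, LinearMap.coe_comp]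
      exact Function.Injective.comp
        (Module.Flat.lTensor_preserves_injective_linearMap _ (Submodule.injective_subtype _))
        (Module.Flat.rTensor_preserves_injective_linearMap _ (Submodule.injective_subtype _))
    have h1 : finrank ℂ (T l m) = finrank ℂ ((Eg l) ⊗[ℂ] (Eh m)) :=
      LinearMap.finrank_range_of_inj hinj
    rw [h1, Module.finrank_tensorProduct]
  set T' : ℂ → Submodule ℂ (V ⊗[ℂ] W) := fun l => T l (l⁻¹ * (-1)) with hT'
  set t : ℂ → ℕ := fun l => finrank ℂ (T' l) with ht
  -- independence of the family T'
  have hindT' : iSupIndep T' :=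
    (Module.End.eigenspaces_iSupIndep a).mono (fun l => f1' l _)
  haveI : Fintype ({l : ℂ | T' l ≠ ⊥} : Set ℂ) := hindT'.fintypeNeBotOfFiniteDimensional
  set s : Finset ℂ := Set.toFinset {l : ℂ | T' l ≠ ⊥} with hss
  have hs : ∀ l, l ∈ s ↔ T' l ≠ ⊥ := fun l => by
    rw [hss, Set.mem_toFinset]; rfl
  have hUsup : F (-1) = ⨆ l ∈ s, T' l := by
    have hF1 : F (-1) = ⨆ l : ℂ, T' l := rfl
    rw [hF1]
    apply le_antisymm
    · refine iSup_le fun l => ?_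
      by_cases hbot : T' l = ⊥
      · rw [hbot]; exact bot_le
      · exact le_iSup₂ (f := fun l (_ : l ∈ s) => T' l) l ((hs l).mpr hbot)
    · exact iSup₂_le fun l _ => le_iSup T' l
  have hrank : finrank ℂ (Module.End.eigenspace k (-1)) = ∑ l ∈ s, t l := by
    rw [f4, hUsup]
    exact aux_finrank_biSup T' hindT' s
  -- arithmetic
  have hd : ∀ l : ℂ, d l⁻¹ = d l :=
    fun l => (aux_finrank_eigen_inv BV g hgiso hVnd hdg l).symm
  have he : ∀ m : ℂ, e m⁻¹ = e m :=
    fun m => (aux_finrank_eigen_inv BW h hhiso hWnd hdh m).symm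
  have ht_inv : ∀ l : ℂ, t l⁻¹ = t l := by
    intro l
    have h1 : t l⁻¹ = d l⁻¹ * e (l⁻¹⁻¹ * (-1)) := hdim l⁻¹ _
    have h2 : t l = d l * e (l⁻¹ * (-1)) := hdim l _
    rw [h1, h2, hd, inv_inv]
    congr 1
    rw [mul_neg_one, mul_neg_one, ← he (-l), inv_neg]
  have hEgbot : Eg 0 = ⊥ := hEg0
  have hT'0 : (0 : ℂ) ∉ s := by
    rw [hs]
    intro hbot
    apply hbot
    apply Submodule.finrank_eq_zero.mp
    have h1 : finrank ℂ (T' 0) = d 0 * e (0⁻¹ * (-1)) := hdim 0 _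
    have hd0 : d 0 = 0 := by
      show finrank ℂ (Eg 0) = 0
      rw [hEgbot]
      exact finrank_bot ℂ _
    rw [h1, hd0, zero_mul]
  have hfix : ∀ l ∈ s, l⁻¹ = l → Even (t l) := by
    intro l hl hinv
    have hl0 : l ≠ 0 := fun h0 => hT'0 (h0 ▸ hl)
    have hsq : l * l = 1 := by
      nth_rewrite 2 [← hinv]
      exact mul_inv_cancel₀ hl0
    have heven : Even (d l) := aux_even_eigen_sq_one BV g hgiso hVnd hValt hdg hsq
    have h2 : t l = d l * e (l⁻¹ * (-1)) := hdim l _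
    rw [h2]
    exact heven.mul_right _
  -- conclude via ZMod 2
  rw [hrank]
  have hz : ((∑ l ∈ s, t l : ℕ) : ZMod 2) = 0 := by
    rw [Nat.cast_sum]
    refine Finset.sum_involution (fun l _ => l⁻¹) ?_ ?_ ?_ ?_
    · intro a _
      rw [ht_inv a]
      exact CharTwo.add_self_eq_zero _
    · intro a ha hne heq
      apply hne
      obtain ⟨k2, hk2⟩ := hfix a ha heq
      rw [hk2]
      push_cast
      exact CharTwo.add_self_eq_zero _
    · intro a ha
      rw [hs] at ha ⊢
      intro hbot
      apply ha
      have h0 : t a = 0 := by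
        rw [← ht_inv a]
        show finrank ℂ (T' a⁻¹) = 0
        rw [show T' a⁻¹ = ⊥ from hbot]
        exact finrank_bot ℂ _
      exact Submodule.finrank_eq_zero.mp h0
    · intro a _
      exact inv_inv a
  rw [even_iff_two_dvd]
  exact (ZMod.natCast_eq_zero_iff _ 2).mp hz
end

section
/- Let T be the subgroup of diagonal matrices in SL₆(ℂ), and let ρ be the representation of SL₆(ℂ) on the third exterior power Λ³ℂ⁶ induced by the standard action on ℂ⁶. Then there exist T-invariant subspaces W and W' of Λ³ℂ⁶ with Λ³ℂ⁶ = W ⊕ W', such that W' with its T-action is isomorphic to the dual representation of W, and there exists a group homomorphism χ : T → ℂ^× such that det(ρ(t)|_W) = χ(t)² for all t ∈ T. (That is, the exterior cube representation of SL₆(ℂ) is anomaly free with respect to its diagonal maximal torus, with η trivial.) -/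
noncomputable section

set_option maxHeartbeats 1000000
set_option synthInstance.maxHeartbeats 400000

private lemma submodulePowMono {R A : Type*} [CommSemiring R] [Semiring A] [Algebra R A]
    {p q : Submodule R A} (h : p ≤ q) : ∀ n : ℕ, p ^ n ≤ q ^ n
  | 0 => le_rfl
  | n + 1 => by
      rw [pow_succ, pow_succ]
      exact mul_le_mul' (submodulePowMono h n) h

/-- The functorial action of an endomorphism on the `n`-th exterior power. -/
lemma extPower_map_mem {M : Type*} [AddCommGroup M] [Module ℂ M]
    (n : ℕ) (f : M →ₗ[ℂ] M) {x : ExteriorAlgebra ℂ M} (hx : x ∈ ⋀[ℂ]^n M) :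
    ExteriorAlgebra.map f x ∈ ⋀[ℂ]^n M := by
  have h0 : Submodule.map (AlgHom.toLinearMap (ExteriorAlgebra.map f))
      (LinearMap.range (ExteriorAlgebra.ι ℂ (M := M))) ≤
      LinearMap.range (ExteriorAlgebra.ι ℂ (M := M)) := by
    rw [ExteriorAlgebra.ι_range_map_map]
    rintro y ⟨m, -, rfl⟩
    exact LinearMap.mem_range_self _ m
  have h1 : Submodule.map (AlgHom.toLinearMap (ExteriorAlgebra.map f)) (⋀[ℂ]^n M) ≤
      ⋀[ℂ]^n M := by
    rw [show (⋀[ℂ]^n M : Submodule ℂ (ExteriorAlgebra ℂ M)) =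
        LinearMap.range (ExteriorAlgebra.ι ℂ (M := M)) ^ n from rfl, Submodule.map_pow]
    exact submodulePowMono h0 n
  exact h1 (Submodule.mem_map_of_mem hx)

/-- The representation of `SL₆(ℂ)` on the third exterior power `Λ³ℂ⁶` induced by the
standard action on `ℂ⁶`. -/
def extCubeRep :
    Representation ℂ (Matrix.SpecialLinearGroup (Fin 6) ℂ) (⋀[ℂ]^3 (Fin 6 → ℂ)) where
  toFun A :=
    (AlgHom.toLinearMap (ExteriorAlgebra.map
      (Matrix.toLin' (A : Matrix (Fin 6) (Fin 6) ℂ)))).restrict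
      (fun _ hx => extPower_map_mem 3 _ hx)
  map_one' := by
    refine LinearMap.ext fun x => Subtype.ext ?_
    simp [LinearMap.restrict_apply, Matrix.SpecialLinearGroup.coe_one, Matrix.toLin'_one,
      ExteriorAlgebra.map_id]
  map_mul' A B := by
    refine LinearMap.ext fun x => Subtype.ext ?_
    show ExteriorAlgebra.map
        (Matrix.toLin' ((A * B : Matrix.SpecialLinearGroup (Fin 6) ℂ) :
          Matrix (Fin 6) (Fin 6) ℂ)) (x : ExteriorAlgebra ℂ (Fin 6 → ℂ)) =
      ExteriorAlgebra.map (Matrix.toLin' (A : Matrix (Fin 6) (Fin 6) ℂ))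
        (ExteriorAlgebra.map (Matrix.toLin' (B : Matrix (Fin 6) (Fin 6) ℂ))
          (x : ExteriorAlgebra ℂ (Fin 6 → ℂ)))
    rw [Matrix.SpecialLinearGroup.coe_mul, Matrix.toLin'_mul]
    exact (DFunLike.congr_fun (ExteriorAlgebra.map_comp_map
      (Matrix.toLin' (B : Matrix (Fin 6) (Fin 6) ℂ))
      (Matrix.toLin' (A : Matrix (Fin 6) (Fin 6) ℂ)))
      (x : ExteriorAlgebra ℂ (Fin 6 → ℂ))).symm

/-- The subgroup of diagonal matrices in `SL₆(ℂ)`. -/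
def diagonalTorus : Subgroup (Matrix.SpecialLinearGroup (Fin 6) ℂ) where
  carrier := {A | Matrix.IsDiag (A : Matrix (Fin 6) (Fin 6) ℂ)}
  one_mem' := by
    show Matrix.IsDiag ((1 : Matrix.SpecialLinearGroup (Fin 6) ℂ) : Matrix (Fin 6) (Fin 6) ℂ)
    rw [Matrix.SpecialLinearGroup.coe_one]
    exact Matrix.isDiag_one
  mul_mem' := by
    intro a b ha hb
    simp only [Set.mem_setOf_eq, Matrix.SpecialLinearGroup.coe_mul]
    intro i j hij
    rw [Matrix.mul_apply]
    apply Finset.sum_eq_zero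
    intro k _
    rcases eq_or_ne i k with rfl | hik
    · rw [hb hij, mul_zero]
    · rw [ha hik, zero_mul]
  inv_mem' := by
    intro a ha
    have hdet : (a : Matrix (Fin 6) (Fin 6) ℂ).det = 1 := a.2
    have hdiag : Matrix.diagonal (Matrix.diag (a : Matrix (Fin 6) (Fin 6) ℂ)) =
        (a : Matrix (Fin 6) (Fin 6) ℂ) := ha.diagonal_diag
    have hprod : ∏ i, Matrix.diag (a : Matrix (Fin 6) (Fin 6) ℂ) i = 1 := by
      rw [← Matrix.det_diagonal, hdiag, hdet]
    have hne : ∀ i, Matrix.diag (a : Matrix (Fin 6) (Fin 6) ℂ) i ≠ 0 := by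
      intro i hi
      have := Finset.prod_eq_zero (Finset.mem_univ i) hi
      rw [hprod] at this
      exact one_ne_zero this
    set d := Matrix.diag (a : Matrix (Fin 6) (Fin 6) ℂ) with hd
    have hdetinv : (Matrix.diagonal fun i => (d i)⁻¹).det = 1 := by
      rw [Matrix.det_diagonal, Finset.prod_inv_distrib, hprod, inv_one]
    set b : Matrix.SpecialLinearGroup (Fin 6) ℂ :=
      ⟨Matrix.diagonal fun i => (d i)⁻¹, hdetinv⟩ with hb
    have hab : a * b = 1 := by
      apply Subtype.ext
      rw [Matrix.SpecialLinearGroup.coe_mul]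
      show (a : Matrix (Fin 6) (Fin 6) ℂ) * Matrix.diagonal (fun i => (d i)⁻¹) = _
      rw [← hdiag, Matrix.diagonal_mul_diagonal]
      rw [Matrix.SpecialLinearGroup.coe_one]
      have : (fun i => d i * (d i)⁻¹) = fun _ => (1 : ℂ) := by
        funext i; exact mul_inv_cancel₀ (hne i)
      rw [this, Matrix.diagonal_one]
    have hinv : a⁻¹ = b := inv_eq_of_mul_eq_one_right hab
    show Matrix.IsDiag ((a⁻¹ : Matrix.SpecialLinearGroup (Fin 6) ℂ) :
      Matrix (Fin 6) (Fin 6) ℂ)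
    rw [hinv]
    exact Matrix.isDiag_diagonal _

namespace AnomalyAux

open ExteriorAlgebra

/-- Standard basis vectors of `ℂ⁶`. -/
def sbv (i : Fin 6) : Fin 6 → ℂ := Pi.single i 1

lemma sbv_injective : Function.Injective sbv := by
  intro i j h
  by_contra hij
  simp only [sbv] at h
  have h1 := congrFun h i
  rw [Pi.single_eq_same, Pi.single_apply, if_neg hij] at h1
  exact one_ne_zero h1

/-- Index type: 3-element subsets of `Fin 6`. -/
abbrev S3 := {s : Finset (Fin 6) // s.card = 3}

/-- The increasing enumeration of a 3-element subset. -/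
def enum (s : S3) : Fin 3 → Fin 6 := fun a => (Finset.orderIsoOfFin s.1 s.2 a : Fin 6)

lemma enum_mem (s : S3) (a : Fin 3) : enum s a ∈ s.1 := (Finset.orderIsoOfFin s.1 s.2 a).2

lemma enum_injective (s : S3) : Function.Injective (enum s) := fun a b h =>
  (Finset.orderIsoOfFin s.1 s.2).injective (Subtype.ext h)

lemma enum_surj (s : S3) {x : Fin 6} (hx : x ∈ s.1) : ∃ a, enum s a = x :=
  ⟨(Finset.orderIsoOfFin s.1 s.2).symm ⟨x, hx⟩, by simp [enum]⟩

lemma prod_enum (s : S3) (f : Fin 6 → ℂ) : (∏ a : Fin 3, f (enum s a)) = ∏ i ∈ s.1, f i := by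
  rw [← Finset.prod_coe_sort s.1 f]
  exact Fintype.prod_equiv (Finset.orderIsoOfFin s.1 s.2).toEquiv _ _ (fun a => rfl)

/-- The wedge basis vectors of `Λ³ℂ⁶` (in the exterior algebra). -/
def eps (s : S3) : ExteriorAlgebra ℂ (Fin 6 → ℂ) := ιMulti ℂ 3 (fun a => sbv (enum s a))

lemma eps_mem (s : S3) : eps s ∈ ⋀[ℂ]^3 (Fin 6 → ℂ) := ιMulti_range ℂ 3 ⟨_, rfl⟩

/-- The wedge basis vectors, as elements of `⋀[ℂ]^3`. -/
def bv (s : S3) : ⋀[ℂ]^3 (Fin 6 → ℂ) := ⟨eps s, eps_mem s⟩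

/-- The coefficient-extraction alternating map associated to a 3-subset. -/
def G (s : S3) : (Fin 6 → ℂ) [⋀^Fin 3]→ₗ[ℂ] ℂ :=
  (Matrix.detRowAlternating : (Fin 3 → ℂ) [⋀^Fin 3]→ₗ[ℂ] ℂ).compLinearMap
    (LinearMap.funLeft ℂ ℂ (enum s))

/-- The coefficient-extraction functional on the exterior algebra. -/
def F (s : S3) : ExteriorAlgebra ℂ (Fin 6 → ℂ) →ₗ[ℂ] ℂ :=
  liftAlternating (Function.update (fun n => (0 : (Fin 6 → ℂ) [⋀^Fin n]→ₗ[ℂ] ℂ)) 3 (G s))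

lemma F_eps (s t : S3) : F s (eps t) = if s = t then 1 else 0 := by
  rw [F, eps, liftAlternating_apply_ιMulti, Function.update_self]
  rw [G, AlternatingMap.compLinearMap_apply]
  by_cases h : s = t
  · subst h
    simp only [if_true]
    have : (fun a => LinearMap.funLeft ℂ ℂ (enum s) (sbv (enum s a))) =
        fun a b => (1 : Matrix (Fin 3) (Fin 3) ℂ) a b := by
      funext a b
      simp only [LinearMap.funLeft_apply, sbv, Pi.single_apply, Matrix.one_apply]
      by_cases hab : a = b
      · simp [hab]
      · rw [if_neg (fun hh => hab ((enum_injective s hh).symm)), if_neg hab]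
    rw [this]
    show Matrix.det (1 : Matrix (Fin 3) (Fin 3) ℂ) = 1
    exact Matrix.det_one
  · rw [if_neg h]
    have hne : ¬ t.1 ⊆ s.1 := by
      intro hsub
      exact h (Subtype.ext ((Finset.eq_of_subset_of_card_le hsub (by rw [s.2, t.2])).symm))
    obtain ⟨x, hxt, hxs⟩ := Finset.not_subset.mp hne
    obtain ⟨a, ha⟩ := enum_surj t hxt
    rw [Matrix.detRowAlternating]
    apply Matrix.det_eq_zero_of_row_eq_zero a
    intro b
    simp only [Matrix.of_apply, LinearMap.funLeft_apply, sbv, Pi.single_apply]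
    rw [if_neg]
    intro hh
    apply hxs
    rw [← ha, ← hh]
    exact enum_mem s b

lemma bv_linearIndependent : LinearIndependent ℂ bv := by
  rw [Fintype.linearIndependent_iff]
  intro c hc t
  have hval : (∑ s, c s • eps s) = 0 := by
    have h0 := congrArg (Submodule.subtype (⋀[ℂ]^3 (Fin 6 → ℂ))) hc
    rw [map_sum, map_zero] at h0
    simp at h0; exact h0
  have h1 := congrArg (F t) hval
  rw [map_sum, map_zero] at h1
  have h2 : ∀ s : S3, F t (c s • eps s) = if t = s then c s else 0 := by
    intro s
    rw [map_smul, F_eps, smul_eq_mul]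
    by_cases h : t = s <;> simp [h]
  rw [Finset.sum_congr rfl (fun s _ => h2 s), Finset.sum_ite_eq] at h1
  simpa using h1

lemma wedge_mem_span (r : Fin 3 → Fin 6) :
    (ιMulti ℂ 3 (fun a => sbv (r a)) : ExteriorAlgebra ℂ (Fin 6 → ℂ)) ∈
      Submodule.span ℂ (Set.range eps) := by
  by_cases hr : Function.Injective r
  · set s : S3 := ⟨Finset.image r Finset.univ, by
      rw [Finset.card_image_of_injective _ hr, Finset.card_univ, Fintype.card_fin]⟩ with hs
    have hmem : ∀ a, r a ∈ s.1 := fun a => Finset.mem_image_of_mem r (Finset.mem_univ a)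
    set g : Fin 3 → Fin 3 := fun a => (Finset.orderIsoOfFin s.1 s.2).symm ⟨r a, hmem a⟩ with hg
    have hginj : Function.Injective g := by
      intro a b h
      apply hr
      have := congrArg (fun x => ((Finset.orderIsoOfFin s.1 s.2 x : Fin 6))) h
      simpa [hg] using this
    let σ : Equiv.Perm (Fin 3) := Equiv.ofBijective g (Finite.injective_iff_bijective.1 hginj)
    have key : ∀ a, enum s (σ a) = r a := by
      intro a
      show ((Finset.orderIsoOfFin s.1 s.2 (g a) : Fin 6)) = r a
      rw [hg]
      simp
    have hfun : (fun a => sbv (r a)) = (fun a => sbv (enum s a)) ∘ σ := by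
      funext a
      simp [Function.comp, key a]
    rw [hfun, AlternatingMap.map_perm]
    rw [Units.smul_def]
    have hb : eps s ∈ Submodule.span ℂ (Set.range eps) := Submodule.subset_span ⟨s, rfl⟩
    exact zsmul_mem hb _
  · rw [AlternatingMap.map_eq_zero_of_not_injective]
    · exact zero_mem _
    · intro hinj
      exact hr (fun a b h => hinj (congrArg sbv h))

lemma span_eps_top : (⋀[ℂ]^3 (Fin 6 → ℂ) : Submodule ℂ (ExteriorAlgebra ℂ (Fin 6 → ℂ))) ≤
    Submodule.span ℂ (Set.range eps) := by
  rw [← ExteriorAlgebra.ιMulti_span_fixedDegree]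
  refine Submodule.span_le.2 ?_
  rintro _ ⟨v, rfl⟩
  have hv : v = fun a => ∑ j, v a j • sbv j := by
    funext a
    rw [← Finset.univ_sum_single (v a)]
    simp only [Finset.sum_apply]
    congr 1
    funext j
    rw [sbv, ← Pi.single_smul, smul_eq_mul, mul_one]
    simp
  rw [hv]
  have hexp := (ιMulti ℂ 3 (M := Fin 6 → ℂ)).toMultilinearMap.map_sum
    (g := fun a j => v a j • sbv j)
  rw [show ((ιMulti ℂ 3 (M := Fin 6 → ℂ)) fun a => ∑ j, v a j • sbv j) =
    (ιMulti ℂ 3 (M := Fin 6 → ℂ)).toMultilinearMap fun a => ∑ j, v a j • sbv j from rfl, hexp]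
  apply sum_mem
  intro r _
  have hsm := (ιMulti ℂ 3 (M := Fin 6 → ℂ)).toMultilinearMap.map_smul_univ
    (fun a => v a (r a)) (fun a => sbv (r a))
  rw [show ((ιMulti ℂ 3 (M := Fin 6 → ℂ)).toMultilinearMap fun a => v a (r a) • sbv (r a)) =
    (ιMulti ℂ 3 (M := Fin 6 → ℂ)).toMultilinearMap fun a => (fun b => v b (r b)) a • sbv (r a)
    from rfl, hsm]
  exact Submodule.smul_mem _ _ (wedge_mem_span r)

lemma span_bv_top : Submodule.span ℂ (Set.range bv) = ⊤ := by
  rw [eq_top_iff]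
  intro x _
  have hx : (x : ExteriorAlgebra ℂ (Fin 6 → ℂ)) ∈ Submodule.span ℂ (Set.range eps) :=
    span_eps_top x.2
  have hrange : Set.range eps =
      (Submodule.subtype (⋀[ℂ]^3 (Fin 6 → ℂ))) '' (Set.range bv) := by
    rw [← Set.range_comp]
    rfl
  rw [hrange, ← Submodule.map_span] at hx
  obtain ⟨y, hy, hxy⟩ := hx
  have : y = x := Subtype.ext hxy
  exact this ▸ hy

/-- The diagonal entries of a torus element. -/
def dT (t : diagonalTorus) (i : Fin 6) : ℂ :=
  ((t : Matrix.SpecialLinearGroup (Fin 6) ℂ) : Matrix (Fin 6) (Fin 6) ℂ) i i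

lemma torus_isDiag (t : diagonalTorus) :
    Matrix.IsDiag ((t : Matrix.SpecialLinearGroup (Fin 6) ℂ) : Matrix (Fin 6) (Fin 6) ℂ) := t.2

set_option maxRecDepth 10000 in
lemma dT_prod_eq_one (t : diagonalTorus) : ∏ i, dT t i = 1 := by
  have hd := (torus_isDiag t).diagonal_diag
  have hdet : ((t : Matrix.SpecialLinearGroup (Fin 6) ℂ) : Matrix (Fin 6) (Fin 6) ℂ).det = 1 :=
    Matrix.SpecialLinearGroup.det_coe _
  rw [← hd, Matrix.det_diagonal] at hdet
  exact hdet

lemma dT_ne_zero (t : diagonalTorus) (i : Fin 6) : dT t i ≠ 0 := by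
  intro h
  have := Finset.prod_eq_zero (Finset.mem_univ i) h
  rw [dT_prod_eq_one] at this
  exact one_ne_zero this

lemma dT_mul (a b : diagonalTorus) (i : Fin 6) : dT (a * b) i = dT a i * dT b i := by
  show (((a * b : diagonalTorus) : Matrix.SpecialLinearGroup (Fin 6) ℂ) :
    Matrix (Fin 6) (Fin 6) ℂ) i i = _
  rw [Subgroup.coe_mul, Matrix.SpecialLinearGroup.coe_mul, Matrix.mul_apply]
  rw [Finset.sum_eq_single i]
  · rfl
  · intro k _ hk
    rw [torus_isDiag a (Ne.symm hk), zero_mul]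
  · intro h
    exact absurd (Finset.mem_univ i) h

lemma dT_one (i : Fin 6) : dT (1 : diagonalTorus) i = 1 := by
  show (((1 : diagonalTorus) : Matrix.SpecialLinearGroup (Fin 6) ℂ) :
    Matrix (Fin 6) (Fin 6) ℂ) i i = 1
  rw [OneMemClass.coe_one, Matrix.SpecialLinearGroup.coe_one, Matrix.one_apply_eq]

lemma dT_inv (t : diagonalTorus) (i : Fin 6) : dT t⁻¹ i = (dT t i)⁻¹ := by
  have h : dT t i * dT t⁻¹ i = 1 := by
    rw [← dT_mul, mul_inv_cancel, dT_one]
  field_simp [dT_ne_zero t i] at h ⊢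
  linear_combination h

/-- The action of a torus element on a basis vector of `ℂ⁶`. -/
lemma toLin_diag (t : diagonalTorus) (i : Fin 6) :
    Matrix.toLin' ((t : Matrix.SpecialLinearGroup (Fin 6) ℂ) : Matrix (Fin 6) (Fin 6) ℂ)
      (sbv i) = dT t i • sbv i := by
  funext j
  rw [Matrix.toLin'_apply, sbv, Matrix.mulVec_single]
  simp only [mul_one, Pi.smul_apply, sbv, Pi.single_apply, smul_eq_mul]
  by_cases h : j = i
  · subst h; simp [dT]
  · rw [if_neg h, mul_zero]; simpa [Matrix.col] using torus_isDiag t h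

/-- Torus elements act on the wedge basis vectors by the product of eigenvalues. -/
lemma rep_bv (t : diagonalTorus) (s : S3) :
    extCubeRep ↑t (bv s) = (∏ a : Fin 3, dT t (enum s a)) • bv s := by
  apply Subtype.ext
  have hL : (extCubeRep ↑t (bv s) : ExteriorAlgebra ℂ (Fin 6 → ℂ)) =
      ExteriorAlgebra.map (Matrix.toLin'
        ((t : Matrix.SpecialLinearGroup (Fin 6) ℂ) : Matrix (Fin 6) (Fin 6) ℂ)) (eps s) := rfl
  rw [hL]
  have hR : ((((∏ a : Fin 3, dT t (enum s a))) • bv s : ⋀[ℂ]^3 (Fin 6 → ℂ)) :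
      ExteriorAlgebra ℂ (Fin 6 → ℂ)) = (∏ a : Fin 3, dT t (enum s a)) • eps s := rfl
  rw [hR, eps, map_apply_ιMulti]
  have hc : (Matrix.toLin' ((t : Matrix.SpecialLinearGroup (Fin 6) ℂ) :
      Matrix (Fin 6) (Fin 6) ℂ)) ∘ (fun a => sbv (enum s a)) =
      fun a => (fun b => dT t (enum s b)) a • sbv (enum s a) := by
    funext a
    exact toLin_diag t (enum s a)
  rw [hc]
  exact (ιMulti ℂ 3 (M := Fin 6 → ℂ)).toMultilinearMap.map_smul_univ
    (fun a => dT t (enum s a)) (fun a => sbv (enum s a))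

lemma count_lemma : ∀ i : Fin 6,
    ((Finset.univ : Finset (Finset (Fin 6))).filter
      (fun u => (u.card = 3 ∧ (0 : Fin 6) ∈ u) ∧ i ∈ u)).card = if i = 0 then 10 else 4 := by
  decide

lemma prod_pow_count (d : Fin 6 → ℂ) (hd : ∏ i, d i = 1) :
    (∏ u ∈ (Finset.univ : Finset (Finset (Fin 6))).filter
      (fun u => u.card = 3 ∧ (0 : Fin 6) ∈ u), ∏ i ∈ u, d i) = d 0 ^ 6 := by
  have h1 : ∀ u ∈ (Finset.univ : Finset (Finset (Fin 6))).filter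
      (fun u => u.card = 3 ∧ (0 : Fin 6) ∈ u),
      (∏ i ∈ u, d i) = ∏ i : Fin 6, if i ∈ u then d i else 1 := by
    intro u _
    rw [Finset.prod_ite_mem, Finset.univ_inter]
  rw [Finset.prod_congr rfl h1, Finset.prod_comm]
  have h2 : ∀ i : Fin 6,
      (∏ u ∈ (Finset.univ : Finset (Finset (Fin 6))).filter
        (fun u => u.card = 3 ∧ (0 : Fin 6) ∈ u), if i ∈ u then d i else 1) =
      d i ^ (if i = 0 then 10 else 4) := by
    intro i
    rw [← Finset.prod_filter, Finset.filter_filter, Finset.prod_const, count_lemma i]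
  rw [Finset.prod_congr rfl (fun i _ => h2 i)]
  have h3 : ∀ i : Fin 6, d i ^ (if i = 0 then 10 else 4) =
      d i ^ 4 * (if i = 0 then d i ^ 6 else 1) := by
    intro i
    by_cases h : i = 0 <;> simp [h] <;> ring
  rw [Finset.prod_congr rfl (fun i _ => h3 i), Finset.prod_mul_distrib, Finset.prod_pow, hd,
    one_pow, Finset.prod_ite_eq', if_pos (Finset.mem_univ (0 : Fin 6)), one_mul]

/-- The index set for `W`: 3-subsets containing `0`. -/
def A : Set S3 := {s : S3 | (0 : Fin 6) ∈ s.1}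

noncomputable instance : Fintype ↥A := Fintype.ofFinite _
noncomputable instance : Fintype ↥(Aᶜ) := Fintype.ofFinite _

def vW : ↥A → ⋀[ℂ]^3 (Fin 6 → ℂ) := fun s => bv s.1
def vW' : ↥(Aᶜ) → ⋀[ℂ]^3 (Fin 6 → ℂ) := fun s => bv s.1

lemma hliW : LinearIndependent ℂ vW := bv_linearIndependent.comp _ Subtype.val_injective
lemma hliW' : LinearIndependent ℂ vW' := bv_linearIndependent.comp _ Subtype.val_injective

def W : Submodule ℂ (⋀[ℂ]^3 (Fin 6 → ℂ)) := Submodule.span ℂ (Set.range vW)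
def W' : Submodule ℂ (⋀[ℂ]^3 (Fin 6 → ℂ)) := Submodule.span ℂ (Set.range vW')

def bW : Module.Basis ↥A ℂ W := Module.Basis.span hliW
def bW' : Module.Basis ↥(Aᶜ) ℂ W' := Module.Basis.span hliW'

lemma coe_bW (s : ↥A) : ((bW s : W) : ⋀[ℂ]^3 (Fin 6 → ℂ)) = bv s.1 := congrArg Subtype.val (Module.Basis.span_apply hliW s)
lemma coe_bW' (s : ↥(Aᶜ)) : ((bW' s : W') : ⋀[ℂ]^3 (Fin 6 → ℂ)) = bv s.1 :=
  congrArg Subtype.val (Module.Basis.span_apply hliW' s)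

lemma range_vW : Set.range vW = bv '' A := by
  rw [show vW = bv ∘ Subtype.val from rfl, Set.range_comp, Subtype.range_coe]

lemma range_vW' : Set.range vW' = bv '' (Aᶜ) := by
  rw [show vW' = bv ∘ Subtype.val from rfl, Set.range_comp, Subtype.range_coe]

lemma isCompl_W_W' : IsCompl W W' := by
  constructor
  · rw [W, W', range_vW, range_vW', disjoint_iff]
    have := bv_linearIndependent.disjoint_span_image
      (disjoint_compl_right : Disjoint A (Aᶜ))
    rw [disjoint_iff] at this
    exact this
  · rw [codisjoint_iff, W, W', range_vW, range_vW', ← Submodule.span_union, ← Set.image_union,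
      Set.union_compl_self, Set.image_univ, span_bv_top]

lemma W_invariant (t : diagonalTorus) : ∀ v ∈ W, extCubeRep ↑t v ∈ W := by
  intro v hv
  have h1 : Submodule.map (extCubeRep ↑t) W ≤ W := by
    rw [W, Submodule.map_span]
    apply Submodule.span_le.2
    rintro _ ⟨_, ⟨s, rfl⟩, rfl⟩
    rw [show vW s = bv s.1 from rfl, rep_bv]
    exact Submodule.smul_mem _ _ (Submodule.subset_span ⟨s, rfl⟩)
  exact h1 ⟨v, hv, rfl⟩

lemma W'_invariant (t : diagonalTorus) : ∀ v ∈ W', extCubeRep ↑t v ∈ W' := by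
  intro v hv
  have h1 : Submodule.map (extCubeRep ↑t) W' ≤ W' := by
    rw [W', Submodule.map_span]
    apply Submodule.span_le.2
    rintro _ ⟨_, ⟨s, rfl⟩, rfl⟩
    rw [show vW' s = bv s.1 from rfl, rep_bv]
    exact Submodule.smul_mem _ _ (Submodule.subset_span ⟨s, rfl⟩)
  exact h1 ⟨v, hv, rfl⟩

/-- Complement of a 3-subset. -/
def compl3 (s : S3) : S3 :=
  ⟨s.1ᶜ, by rw [Finset.card_compl, s.2]; rfl⟩

/-- The complement bijection between the index sets of `W'` and `W`. -/
def cEquiv : ↥(Aᶜ) ≃ ↥A where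
  toFun s := ⟨compl3 s.1, by
    have hs : (0 : Fin 6) ∉ s.1.1.1 := s.2
    exact Finset.mem_compl.2 hs⟩
  invFun s := ⟨compl3 s.1, by
    have hs : (0 : Fin 6) ∈ s.1.1 := s.2
    intro hmem
    exact (Finset.mem_compl.1 hmem) hs⟩
  left_inv s := Subtype.ext (Subtype.ext (compl_compl _))
  right_inv s := Subtype.ext (Subtype.ext (compl_compl _))

lemma dT_compl (t : diagonalTorus) (s : S3) :
    (∏ a : Fin 3, dT t (enum s a)) = ∏ a : Fin 3, dT t⁻¹ (enum (compl3 s) a) := by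
  rw [prod_enum, prod_enum]
  have h1 : (∏ i ∈ (compl3 s).1, dT t⁻¹ i) = (∏ i ∈ s.1ᶜ, dT t i)⁻¹ := by
    rw [show (compl3 s).1 = s.1ᶜ from rfl]
    rw [Finset.prod_congr rfl (fun i _ => dT_inv t i), Finset.prod_inv_distrib]
  rw [h1]
  have h2 : (∏ i ∈ s.1, dT t i) * (∏ i ∈ s.1ᶜ, dT t i) = 1 := by
    rw [Finset.prod_mul_prod_compl, dT_prod_eq_one]
  exact eq_inv_of_mul_eq_one_left h2

/-- The character `t ↦ t₀₀³`. -/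
def chi : diagonalTorus →* ℂˣ where
  toFun t := (Units.mk0 (dT t 0) (dT_ne_zero t 0)) ^ 3
  map_one' := by
    apply Units.ext
    simp [dT_one]
  map_mul' a b := by
    apply Units.ext
    simp [dT_mul, mul_pow]

end AnomalyAux


/-- The exterior cube representation of `SL₆(ℂ)` is anomaly free with
respect to its diagonal maximal torus `T`, with `η` trivial: `Λ³ℂ⁶` decomposes as
`W ⊕ W'` with `W, W'` `T`-invariant, `W'` isomorphic as a `T`-representation to the dual
of `W`, and `det` of the `T`-action on `W` is the square of a character of `T`. -/
theorem extCubeRep_anomaly_free :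
    ∃ (W W' : Submodule ℂ (⋀[ℂ]^3 (Fin 6 → ℂ)))
      (hW : ∀ t : diagonalTorus, ∀ v ∈ W, extCubeRep ↑t v ∈ W)
      (hW' : ∀ t : diagonalTorus, ∀ v ∈ W', extCubeRep ↑t v ∈ W'),
      IsCompl W W' ∧
      (∃ e : W' ≃ₗ[ℂ] Module.Dual ℂ W,
        ∀ (t : diagonalTorus) (w' : W') (w : W),
          e ⟨extCubeRep ↑t ↑w', hW' t ↑w' w'.2⟩ w =
            e w' ⟨extCubeRep ↑(t⁻¹) ↑w, hW t⁻¹ ↑w w.2⟩) ∧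
      ∃ χ : diagonalTorus →* ℂˣ,
        ∀ t : diagonalTorus,
          LinearMap.det (M := W) (A := ℂ) ((extCubeRep ↑t).restrict (hW t)) = (χ t : ℂ) ^ 2 := by
  classical
  refine ⟨AnomalyAux.W, AnomalyAux.W', AnomalyAux.W_invariant, AnomalyAux.W'_invariant,
    AnomalyAux.isCompl_W_W', ?_, ?_⟩
  · refine ⟨Module.Basis.equiv AnomalyAux.bW'
      (Module.Basis.dualBasis (ι := ↥AnomalyAux.A) (R := ℂ) (M := ↥AnomalyAux.W) AnomalyAux.bW)
      AnomalyAux.cEquiv, ?_⟩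
    intro t w' w
    set e := Module.Basis.equiv AnomalyAux.bW'
      (Module.Basis.dualBasis (ι := ↥AnomalyAux.A) (R := ℂ) (M := ↥AnomalyAux.W) AnomalyAux.bW)
      AnomalyAux.cEquiv with he
    have main : e.toLinearMap ∘ₗ (extCubeRep ↑t).restrict (AnomalyAux.W'_invariant t) =
        ((extCubeRep ↑(t⁻¹)).restrict (AnomalyAux.W_invariant t⁻¹)).dualMap ∘ₗ
          e.toLinearMap := by
      refine AnomalyAux.bW'.ext fun s' => ?_
      simp only [LinearMap.comp_apply, LinearEquiv.coe_toLinearMap]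
      refine AnomalyAux.bW.ext fun s => ?_
      have hq : (extCubeRep ↑t).restrict (AnomalyAux.W'_invariant t) (AnomalyAux.bW' s') =
          (∏ a : Fin 3, AnomalyAux.dT t (AnomalyAux.enum s'.1 a)) • AnomalyAux.bW' s' := by
        apply Subtype.ext
        rw [LinearMap.restrict_coe_apply, AnomalyAux.coe_bW', SetLike.val_smul,
          AnomalyAux.coe_bW']
        exact AnomalyAux.rep_bv t s'.1
      have hp : (extCubeRep ↑(t⁻¹)).restrict (AnomalyAux.W_invariant t⁻¹) (AnomalyAux.bW s) =
          (∏ a : Fin 3, AnomalyAux.dT t⁻¹ (AnomalyAux.enum s.1 a)) • AnomalyAux.bW s := by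
        apply Subtype.ext
        rw [LinearMap.restrict_coe_apply, AnomalyAux.coe_bW, SetLike.val_smul,
          AnomalyAux.coe_bW]
        exact AnomalyAux.rep_bv t⁻¹ s.1
      rw [hq, map_smul, LinearMap.smul_apply, LinearMap.dualMap_apply, hp, map_smul, he,
        Module.Basis.equiv_apply, Module.Basis.dualBasis_apply_self]
      by_cases h : s = AnomalyAux.cEquiv s'
      · rw [if_pos h, smul_eq_mul, smul_eq_mul, mul_one, mul_one, h]
        exact AnomalyAux.dT_compl t s'.1
      · rw [if_neg h, smul_zero, smul_zero]
    have h2 := LinearMap.congr_fun (LinearMap.congr_fun main w') w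
    simp only [LinearMap.comp_apply, LinearEquiv.coe_toLinearMap,
      LinearMap.dualMap_apply] at h2
    exact h2
  · refine ⟨AnomalyAux.chi, fun t => ?_⟩
    have hf : ∀ s : ↥AnomalyAux.A,
        (extCubeRep ↑t).restrict (AnomalyAux.W_invariant t) (AnomalyAux.bW s) =
        (∏ a : Fin 3, AnomalyAux.dT t (AnomalyAux.enum s.1 a)) • AnomalyAux.bW s := by
      intro s
      apply Subtype.ext
      rw [LinearMap.restrict_coe_apply, AnomalyAux.coe_bW, SetLike.val_smul, AnomalyAux.coe_bW]
      exact AnomalyAux.rep_bv t s.1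
    have hm : LinearMap.toMatrix AnomalyAux.bW AnomalyAux.bW
        ((extCubeRep ↑t).restrict (AnomalyAux.W_invariant t)) =
        Matrix.diagonal (fun s : ↥AnomalyAux.A =>
          ∏ a : Fin 3, AnomalyAux.dT t (AnomalyAux.enum s.1 a)) := by
      ext i j
      rw [LinearMap.toMatrix_apply, hf j, map_smul, Finsupp.smul_apply, Module.Basis.repr_self,
        Finsupp.single_apply, Matrix.diagonal_apply]
      by_cases h : i = j
      · subst h; rw [if_pos rfl, if_pos rfl, smul_eq_mul, mul_one]
      · rw [if_neg (fun hh => h hh.symm), if_neg h, smul_zero]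
    rw [← LinearMap.det_toMatrix AnomalyAux.bW, hm, Matrix.det_diagonal]
    have hs1 : ∀ s : ↥AnomalyAux.A,
        (∏ a : Fin 3, AnomalyAux.dT t (AnomalyAux.enum s.1 a)) =
          ∏ i ∈ s.1.1, AnomalyAux.dT t i := fun s => AnomalyAux.prod_enum s.1 _
    rw [Finset.prod_congr rfl (fun s _ => hs1 s)]
    let E : ↥AnomalyAux.A ≃ {u : Finset (Fin 6) // u.card = 3 ∧ (0 : Fin 6) ∈ u} :=
      { toFun := fun s => ⟨s.1.1, s.1.2, s.2⟩
        invFun := fun u => ⟨⟨u.1, u.2.1⟩, u.2.2⟩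
        left_inv := fun s => rfl
        right_inv := fun u => rfl }
    have ht : (∏ s : ↥AnomalyAux.A, ∏ i ∈ s.1.1, AnomalyAux.dT t i) =
        ∏ u ∈ (Finset.univ : Finset (Finset (Fin 6))).filter
          (fun u => u.card = 3 ∧ (0 : Fin 6) ∈ u), ∏ i ∈ u, AnomalyAux.dT t i := by
      have hE := Fintype.prod_equiv E
        (fun s : ↥AnomalyAux.A => ∏ i ∈ (s : AnomalyAux.S3).1, AnomalyAux.dT t i)
        (fun u => ∏ i ∈ u.1, AnomalyAux.dT t i) (fun s => rfl)
      rw [hE]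
      exact (Finset.prod_subtype _ (fun u => by simp) (fun u => ∏ i ∈ u, AnomalyAux.dT t i)).symm
    rw [ht, AnomalyAux.prod_pow_count _ (AnomalyAux.dT_prod_eq_one t)]
    have hchi : ((AnomalyAux.chi t : ℂˣ) : ℂ) = AnomalyAux.dT t 0 ^ 3 := by
      simp [AnomalyAux.chi]
    rw [hchi, ← pow_mul]
end
end
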